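/- arXiv:1207.1893 — 4 statements merged into one kernel-verified Lean document; each statement's English description precedes it below -/
import Mathlib

section
/- Let T > 0 and let A, J be real n×n matrices. The following are equivalent: (a) for every initial vector x₀ ∈ ℝⁿ, the sequence (x_k) defined by x_{k+1} = exp(T·A)·J·x_k, x_0 = x₀, satisfies sup_{τ∈[0,T]} ‖exp(τ·A)·J·x_k‖ → 0 as k → ∞ (asymptotic stability of the T-periodic impulsive system); (b) for every x₀ ∈ ℝⁿ, the sequence (x_k) with x_{k+1} = exp(T·A)·J·x_k tends to 0 as k → ∞; (c) there exists a real symmetric positive definite n×n matrix P such that ℐ(P,A,J,T) is negative definite. -/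
open Matrix Filter

/-- Matrix exponential of a real square matrix. -/
noncomputable def mexp {n : ℕ} (A : Matrix (Fin n) (Fin n) ℝ) : Matrix (Fin n) (Fin n) ℝ :=
  NormedSpace.exp A

/-- ℐ(P,A,J,T) := Jᵀ·exp(T·Aᵀ)·P·exp(T·A)·J − P. -/
noncomputable def scrI {n : ℕ} (P A J : Matrix (Fin n) (Fin n) ℝ) (T : ℝ) :
    Matrix (Fin n) (Fin n) ℝ :=
  Jᵀ * mexp (T • Aᵀ) * P * mexp (T • A) * J - P

/-- xᵀMx < 0 for all x ≠ 0. -/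
def negDef {m : Type*} [Fintype m] (M : Matrix m m ℝ) : Prop :=
  ∀ x : m → ℝ, x ≠ 0 → x ⬝ᵥ M.mulVec x < 0

/-- xᵀMx > 0 for all x ≠ 0. -/
def posDef {m : Type*} [Fintype m] (M : Matrix m m ℝ) : Prop :=
  ∀ x : m → ℝ, x ≠ 0 → 0 < x ⬝ᵥ M.mulVec x

/-- xᵀMx ≥ 0 for all x. -/
def posSemidef {m : Type*} [Fintype m] (M : Matrix m m ℝ) : Prop :=
  ∀ x : m → ℝ, 0 ≤ x ⬝ᵥ M.mulVec x

section AuxLyap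

open scoped NNReal

attribute [local instance] Matrix.linftyOpSemiNormedRing Matrix.linftyOpNormedRing
  Matrix.linftyOpNormedAlgebra

variable {n : ℕ}

private lemma entry_nnnorm_le (X : Matrix (Fin n) (Fin n) ℝ) (i j : Fin n) : ‖X i j‖₊ ≤ ‖X‖₊ := by
  rw [Matrix.linfty_opNNNorm_def]
  refine le_trans (Finset.single_le_sum (f := fun j => ‖X i j‖₊) (fun _ _ => zero_le)
    (Finset.mem_univ j)) (Finset.le_sup (f := fun i => ∑ j, ‖X i j‖₊) (Finset.mem_univ i))

private lemma norm_transpose_le (X : Matrix (Fin n) (Fin n) ℝ) : ‖Xᵀ‖ ≤ n * ‖X‖ := by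
  have h : ‖Xᵀ‖₊ ≤ (n : ℝ≥0) * ‖X‖₊ := by
    rw [Matrix.linfty_opNNNorm_def]
    apply Finset.sup_le
    intro j _
    calc ∑ i, ‖Xᵀ j i‖₊ ≤ ∑ _i : Fin n, ‖X‖₊ :=
          Finset.sum_le_sum fun i _ => entry_nnnorm_le X i j
      _ = (n : ℝ≥0) * ‖X‖₊ := by simp [mul_comm]
  calc ‖Xᵀ‖ = ((‖Xᵀ‖₊ : ℝ≥0) : ℝ) := rfl
    _ ≤ (((n : ℝ≥0) * ‖X‖₊ : ℝ≥0) : ℝ) := by exact_mod_cast h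
    _ = n * ‖X‖ := by push_cast; rfl

private lemma norm_le_sum_mulVec (X : Matrix (Fin n) (Fin n) ℝ) :
    ‖X‖ ≤ ∑ j, ‖X *ᵥ Pi.single j 1‖ := by
  have h : ‖X‖₊ ≤ ∑ j, ‖X *ᵥ Pi.single j 1‖₊ := by
    rw [Matrix.linfty_opNNNorm_def]
    apply Finset.sup_le
    intro i _
    apply Finset.sum_le_sum
    intro j _
    have h1 : (X *ᵥ Pi.single j 1) i = X i j := by simp
    calc ‖X i j‖₊ = ‖(X *ᵥ Pi.single j 1) i‖₊ := by rw [h1]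
      _ ≤ ‖X *ᵥ Pi.single j 1‖₊ := nnnorm_le_pi_nnnorm _ i
  calc ‖X‖ = ((‖X‖₊ : ℝ≥0) : ℝ) := rfl
    _ ≤ ((∑ j, ‖X *ᵥ Pi.single j 1‖₊ : ℝ≥0) : ℝ) := by exact_mod_cast h
    _ = ∑ j, ‖X *ᵥ Pi.single j 1‖ := by push_cast; rfl

private lemma pow_norm_le_geom (M : Matrix (Fin n) (Fin n) ℝ) {m : ℕ} (hm : 0 < m)
    (hMm : ‖M ^ m‖ ≤ 1 / 2) :
    ∀ k, ‖M ^ k‖ ≤ (max ‖(1 : Matrix (Fin n) (Fin n) ℝ)‖ ((1 + ‖M‖) ^ m)) * (1 / 2) ^ (k / m) := by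
  set B := max ‖(1 : Matrix (Fin n) (Fin n) ℝ)‖ ((1 + ‖M‖) ^ m) with hB
  have hB0 : 0 ≤ B := le_trans (norm_nonneg _) (le_max_left _ _)
  intro k
  induction k using Nat.strong_induction_on with
  | _ k ih =>
    rcases lt_or_ge k m with hk | hk
    · have hdiv : k / m = 0 := Nat.div_eq_of_lt hk
      rw [hdiv, pow_zero, mul_one]
      rcases Nat.eq_zero_or_pos k with rfl | hk0
      · rw [pow_zero]; exact le_trans (le_max_left _ _) (le_refl B)
      · calc ‖M ^ k‖ ≤ ‖M‖ ^ k := norm_pow_le' M hk0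
          _ ≤ (1 + ‖M‖) ^ k := by
              apply pow_le_pow_left₀ (norm_nonneg _)
              linarith
          _ ≤ (1 + ‖M‖) ^ m := by
              apply pow_le_pow_right₀ (by linarith [norm_nonneg M]) hk.le
          _ ≤ B := le_max_right _ _
    · have hsplit : M ^ k = M ^ m * M ^ (k - m) := by
        rw [← pow_add, Nat.add_sub_cancel' hk]
      have hdiv : k / m = (k - m) / m + 1 := by
        rw [Nat.div_eq_sub_div hm hk]
      calc ‖M ^ k‖ ≤ ‖M ^ m‖ * ‖M ^ (k - m)‖ := by rw [hsplit]; exact norm_mul_le _ _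
        _ ≤ (1 / 2) * (B * (1 / 2) ^ ((k - m) / m)) := by
            apply mul_le_mul hMm (ih _ (by omega)) (norm_nonneg _) (by norm_num)
        _ = B * (1 / 2) ^ ((k - m) / m + 1) := by ring
        _ = B * (1 / 2) ^ (k / m) := by rw [hdiv]

private lemma summable_geom_div {m : ℕ} (hm : 0 < m) :
    Summable (fun k => ((1 : ℝ) / 2) ^ (k / m)) := by
  have key : ∀ Q : ℕ, ∑ k ∈ Finset.range (m * Q), ((1 : ℝ) / 2) ^ (k / m) =
      m * ∑ q ∈ Finset.range Q, ((1 : ℝ) / 2) ^ q := by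
    intro Q
    induction Q with
    | zero => simp
    | succ Q ih =>
      rw [Nat.mul_succ, Finset.sum_range_add, ih, Finset.sum_range_succ]
      have : ∀ i ∈ Finset.range m, ((1:ℝ)/2) ^ ((m * Q + i) / m) = ((1:ℝ)/2) ^ Q := by
        intro i hi
        congr 1
        rw [Finset.mem_range] at hi
        rw [Nat.mul_add_div hm]
        simp [Nat.div_eq_of_lt hi]
      rw [Finset.sum_congr rfl this, Finset.sum_const, Finset.card_range]
      ring
  apply summable_of_sum_range_le (c := m * 2) (fun k => by positivity)
  intro N
  calc ∑ k ∈ Finset.range N, ((1:ℝ)/2) ^ (k / m)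
      ≤ ∑ k ∈ Finset.range (m * N), ((1:ℝ)/2) ^ (k / m) := by
        apply Finset.sum_le_sum_of_subset_of_nonneg
        · apply Finset.range_subset_range.2; nlinarith [Nat.one_le_iff_ne_zero.2 hm.ne']
        · intros; positivity
    _ = m * ∑ q ∈ Finset.range N, ((1:ℝ)/2) ^ q := key N
    _ ≤ m * 2 := by
        apply mul_le_mul_of_nonneg_left _ (by positivity)
        have := sum_geometric_two_le N
        linarith

/-- The quadratic-form-evaluation continuous linear map. -/
private noncomputable def quadCLM (x : Fin n → ℝ) : Matrix (Fin n) (Fin n) ℝ →L[ℝ] ℝ :=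
  LinearMap.toContinuousLinearMap
    { toFun := fun X => x ⬝ᵥ X *ᵥ x
      map_add' := by intros; simp [Matrix.add_mulVec, dotProduct_add]
      map_smul' := by intros; simp [Matrix.smul_mulVec, dotProduct_smul] }

/-- The congruence continuous linear map `X ↦ Mᵀ * X * M`. -/
private noncomputable def congCLM (M : Matrix (Fin n) (Fin n) ℝ) :
    Matrix (Fin n) (Fin n) ℝ →L[ℝ] Matrix (Fin n) (Fin n) ℝ :=
  LinearMap.toContinuousLinearMap
    { toFun := fun X => Mᵀ * X * M
      map_add' := by intros; simp [Matrix.mul_add, Matrix.add_mul]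
      map_smul' := by intros; simp [Matrix.mul_smul, Matrix.smul_mul]}

private lemma lyapunov_exists (M : Matrix (Fin n) (Fin n) ℝ)
    (hM : ∀ x₀ : Fin n → ℝ, Tendsto (fun k => (M ^ k) *ᵥ x₀) atTop (nhds 0)) :
    ∃ P : Matrix (Fin n) (Fin n) ℝ, P.IsSymm ∧ posDef P ∧ negDef (Mᵀ * P * M - P) := by
  have hnorm : Tendsto (fun k => ‖M ^ k‖) atTop (nhds 0) := by
    have hup : Tendsto (fun k => ∑ j, ‖(M ^ k) *ᵥ Pi.single j 1‖) atTop (nhds 0) := by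
      have := tendsto_finset_sum (Finset.univ : Finset (Fin n))
        (fun j _ => (hM (Pi.single j 1)).norm)
      simpa using this
    exact squeeze_zero (fun k => norm_nonneg _) (fun k => norm_le_sum_mulVec (M ^ k)) hup
  obtain ⟨m, hm2, hm1⟩ : ∃ m, ‖M ^ m‖ ≤ 1 / 2 ∧ 1 ≤ m := by
    have h1 : ∀ᶠ k in atTop, ‖M ^ k‖ < 1 / 2 :=
      hnorm.eventually_lt_const (by norm_num)
    obtain ⟨m, h1, h2⟩ := (h1.and (eventually_ge_atTop 1)).exists
    exact ⟨m, h1.le, h2⟩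
  set B := max ‖(1 : Matrix (Fin n) (Fin n) ℝ)‖ ((1 + ‖M‖) ^ m) with hBdef
  have hB0 : 0 ≤ B := le_trans (norm_nonneg _) (le_max_left _ _)
  have hbd : ∀ k, ‖M ^ k‖ ≤ B * (1 / 2) ^ (k / m) := pow_norm_le_geom M hm1 hm2
  set f : ℕ → Matrix (Fin n) (Fin n) ℝ := fun k => (Mᵀ) ^ k * M ^ k with hfdef
  have hfbd : ∀ k, ‖f k‖ ≤ (n * B * B) * (1 / 2) ^ (k / m) := by
    intro k
    have h1 : ‖f k‖ ≤ ‖(Mᵀ) ^ k‖ * ‖M ^ k‖ := norm_mul_le _ _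
    have h2 : ‖(Mᵀ) ^ k‖ ≤ n * ‖M ^ k‖ := by
      rw [← Matrix.transpose_pow]; exact norm_transpose_le _
    have h3 := hbd k
    have h4 : (0:ℝ) ≤ (1/2 : ℝ) ^ (k / m) := by positivity
    have h5 : ((1:ℝ)/2) ^ (k / m) ≤ 1 := pow_le_one₀ (by norm_num) (by norm_num)
    have h6 : (0:ℝ) ≤ ‖M ^ k‖ := norm_nonneg _
    calc ‖f k‖ ≤ ‖(Mᵀ) ^ k‖ * ‖M ^ k‖ := h1
      _ ≤ ((n:ℝ) * ‖M ^ k‖) * ‖M ^ k‖ := mul_le_mul_of_nonneg_right h2 h6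
      _ ≤ ((n:ℝ) * (B * (1/2) ^ (k/m))) * (B * (1/2) ^ (k/m)) := by
          apply mul_le_mul (mul_le_mul_of_nonneg_left h3 (Nat.cast_nonneg n)) h3 h6
          positivity
      _ = ((n:ℝ) * B * B) * ((1/2) ^ (k/m) * (1/2) ^ (k/m)) := by ring
      _ ≤ ((n:ℝ) * B * B) * ((1/2) ^ (k/m)) := by
          apply mul_le_mul_of_nonneg_left _ (by positivity)
          nlinarith
  have hsum : Summable f := by
    apply Summable.of_norm_bounded ((summable_geom_div hm1).mul_left (n * B * B)) hfbd
  set P := ∑' k, f k with hPdef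
  have hquad : ∀ x : Fin n → ℝ, x ⬝ᵥ P *ᵥ x = ∑' k, (M ^ k *ᵥ x) ⬝ᵥ (M ^ k *ᵥ x) := by
    intro x
    have h1 : x ⬝ᵥ P *ᵥ x = quadCLM x P := rfl
    have h2 := (quadCLM x).map_tsum hsum
    have h3 : ∀ k, quadCLM x (f k) = (M ^ k *ᵥ x) ⬝ᵥ (M ^ k *ᵥ x) := by
      intro k
      show x ⬝ᵥ ((Mᵀ) ^ k * M ^ k) *ᵥ x = _
      rw [← Matrix.mulVec_mulVec, Matrix.dotProduct_mulVec, ← Matrix.transpose_pow,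
        Matrix.vecMul_transpose]
    rw [h1, h2]
    exact tsum_congr h3
  have hsummap : ∀ x : Fin n → ℝ, Summable (fun k => (M ^ k *ᵥ x) ⬝ᵥ (M ^ k *ᵥ x)) := by
    intro x
    have := hsum.map (quadCLM x).toLinearMap.toAddMonoidHom (quadCLM x).continuous
    apply this.congr
    intro k
    show quadCLM x (f k) = _
    show x ⬝ᵥ ((Mᵀ) ^ k * M ^ k) *ᵥ x = _
    rw [← Matrix.mulVec_mulVec, Matrix.dotProduct_mulVec, ← Matrix.transpose_pow,
      Matrix.vecMul_transpose]
  refine ⟨P, ?_, ?_, ?_⟩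
  · rw [Matrix.IsSymm, hPdef, Matrix.transpose_tsum]
    apply tsum_congr
    intro k
    simp [hfdef, Matrix.transpose_mul, Matrix.transpose_pow]
  · intro x hx
    have hxx : 0 < x ⬝ᵥ x := by
      obtain ⟨i, hi⟩ := Function.ne_iff.mp hx
      have : x i ≠ 0 := by simpa using hi
      apply Finset.sum_pos' (fun j _ => mul_self_nonneg _)
      exact ⟨i, Finset.mem_univ i, mul_self_pos.mpr this⟩
    show 0 < x ⬝ᵥ P *ᵥ x
    rw [hquad x]
    have h0 : (M ^ 0 *ᵥ x) ⬝ᵥ (M ^ 0 *ᵥ x) = x ⬝ᵥ x := by simp [Matrix.one_mulVec]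
    calc (0:ℝ) < x ⬝ᵥ x := hxx
      _ = (M ^ 0 *ᵥ x) ⬝ᵥ (M ^ 0 *ᵥ x) := h0.symm
      _ ≤ ∑' k, (M ^ k *ᵥ x) ⬝ᵥ (M ^ k *ᵥ x) := by
          apply Summable.le_tsum (hsummap x) 0
          intro j _
          exact Finset.sum_nonneg fun i _ => mul_self_nonneg _
  · have hMPM : Mᵀ * P * M = P - 1 := by
      have h1 : Mᵀ * P * M = congCLM M P := rfl
      have h2 := (congCLM M).map_tsum hsum
      have h3 : ∀ k, congCLM M (f k) = f (k + 1) := by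
        intro k
        show Mᵀ * ((Mᵀ) ^ k * M ^ k) * M = (Mᵀ) ^ (k + 1) * M ^ (k + 1)
        rw [pow_succ' Mᵀ k, pow_succ M k]
        noncomm_ring
      have h4 : P = f 0 + ∑' k, f (k + 1) := Summable.tsum_eq_zero_add hsum
      have h5 : f 0 = 1 := by simp [hfdef]
      rw [h1, h2, tsum_congr h3]
      rw [h4, h5]
      abel
    rw [hMPM]
    intro x hx
    have hxx : 0 < x ⬝ᵥ x := by
      obtain ⟨i, hi⟩ := Function.ne_iff.mp hx
      have : x i ≠ 0 := by simpa using hi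
      apply Finset.sum_pos' (fun j _ => mul_self_nonneg _)
      exact ⟨i, Finset.mem_univ i, mul_self_pos.mpr this⟩
    have h6 : P - 1 - P = (-1 : Matrix (Fin n) (Fin n) ℝ) := by abel
    rw [h6]
    simpa [Matrix.neg_mulVec, Matrix.one_mulVec, dotProduct_neg] using hxx

private lemma lyapunov_tendsto (M P : Matrix (Fin n) (Fin n) ℝ) (hP : posDef P)
    (hS : negDef (Mᵀ * P * M - P)) (x₀ : Fin n → ℝ) :
    Tendsto (fun k => (M ^ k) *ᵥ x₀) atTop (nhds 0) := by
  rcases Nat.eq_zero_or_pos n with rfl | hn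
  · have : (fun k => (M ^ k) *ᵥ x₀) = fun _ => 0 := funext fun k => funext fun i => i.elim0
    rw [this]; exact tendsto_const_nhds
  set Q : (Fin n → ℝ) → ℝ := fun v => v ⬝ᵥ P *ᵥ v with hQdef
  set S : Matrix (Fin n) (Fin n) ℝ := Mᵀ * P * M - P with hSdef
  set R : (Fin n → ℝ) → ℝ := fun v => v ⬝ᵥ S *ᵥ v with hRdef
  have hQcont : Continuous Q :=
    Continuous.dotProduct continuous_id (Continuous.matrix_mulVec continuous_const
      continuous_id)
  have hRcont : Continuous R :=
    Continuous.dotProduct continuous_id (Continuous.matrix_mulVec continuous_const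
      continuous_id)
  have hne : (Metric.sphere (0 : Fin n → ℝ) 1).Nonempty := by
    haveI : Nonempty (Fin n) := ⟨⟨0, hn⟩⟩
    refine ⟨fun _ => 1, ?_⟩
    rw [mem_sphere_zero_iff_norm]
    simp
  have hcomp : IsCompact (Metric.sphere (0 : Fin n → ℝ) 1) := isCompact_sphere 0 1
  have hsne : ∀ v ∈ Metric.sphere (0 : Fin n → ℝ) 1, v ≠ 0 := by
    intro v hv
    rw [mem_sphere_zero_iff_norm] at hv
    intro h; rw [h] at hv; simp at hv
  obtain ⟨a, ha, hamin'⟩ := hcomp.exists_isMinOn hne hQcont.continuousOn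
  obtain ⟨b, hb, hbmax'⟩ := hcomp.exists_isMaxOn hne hQcont.continuousOn
  obtain ⟨e, he, hemax'⟩ := hcomp.exists_isMaxOn hne hRcont.continuousOn
  have hamin : ∀ v ∈ Metric.sphere (0 : Fin n → ℝ) 1, Q a ≤ Q v := fun v hv => hamin' hv
  have hbmax : ∀ v ∈ Metric.sphere (0 : Fin n → ℝ) 1, Q v ≤ Q b := fun v hv => hbmax' hv
  have hemax : ∀ v ∈ Metric.sphere (0 : Fin n → ℝ) 1, R v ≤ R e := fun v hv => hemax' hv
  set c₁ := Q a with hc₁def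
  set c₂ := Q b with hc₂def
  set d := R e with hddef
  have hc₁ : 0 < c₁ := hP a (hsne a ha)
  have hc₂ : 0 < c₂ := lt_of_lt_of_le hc₁ (hbmax a ha)
  have hd : d < 0 := hS e (hsne e he)
  have homog : ∀ (N : Matrix (Fin n) (Fin n) ℝ) (v : Fin n → ℝ) (t : ℝ),
      (t • v) ⬝ᵥ N *ᵥ (t • v) = t ^ 2 * (v ⬝ᵥ N *ᵥ v) := by
    intro N v t
    rw [Matrix.mulVec_smul, smul_dotProduct, dotProduct_smul]
    simp [smul_eq_mul]; ring
  have hscale : ∀ v : Fin n → ℝ, v ≠ 0 → ∃ u ∈ Metric.sphere (0 : Fin n → ℝ) 1,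
      v = ‖v‖ • u := by
    intro v hv
    have hnv : ‖v‖ ≠ 0 := norm_ne_zero_iff.mpr hv
    refine ⟨‖v‖⁻¹ • v, ?_, ?_⟩
    · rw [mem_sphere_zero_iff_norm, norm_smul, norm_inv, norm_norm,
        inv_mul_cancel₀ hnv]
    · rw [smul_smul, mul_inv_cancel₀ hnv, one_smul]
  have hlow : ∀ v : Fin n → ℝ, c₁ * ‖v‖ ^ 2 ≤ Q v := by
    intro v
    by_cases hv : v = 0
    · subst hv; simp [hQdef]
    · obtain ⟨u, hu, huv⟩ := hscale v hv
      have := hamin u hu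
      have hQv : Q v = ‖v‖ ^ 2 * Q u := by
        conv_lhs => rw [huv]
        exact homog P u ‖v‖
      nlinarith [sq_nonneg ‖v‖]
  have hup : ∀ v : Fin n → ℝ, Q v ≤ c₂ * ‖v‖ ^ 2 := by
    intro v
    by_cases hv : v = 0
    · subst hv; simp [hQdef]
    · obtain ⟨u, hu, huv⟩ := hscale v hv
      have := hbmax u hu
      have hQv : Q v = ‖v‖ ^ 2 * Q u := by
        conv_lhs => rw [huv]
        exact homog P u ‖v‖
      nlinarith [sq_nonneg ‖v‖]
  have hRup : ∀ v : Fin n → ℝ, R v ≤ d * ‖v‖ ^ 2 := by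
    intro v
    by_cases hv : v = 0
    · subst hv; simp [hRdef]
    · obtain ⟨u, hu, huv⟩ := hscale v hv
      have := hemax u hu
      have hRv : R v = ‖v‖ ^ 2 * R u := by
        conv_lhs => rw [huv]
        exact homog S u ‖v‖
      nlinarith [sq_nonneg ‖v‖]
  have hQM : ∀ v : Fin n → ℝ, Q (M *ᵥ v) = Q v + R v := by
    intro v
    have : v ⬝ᵥ (Mᵀ * P * M) *ᵥ v = (M *ᵥ v) ⬝ᵥ P *ᵥ (M *ᵥ v) := by
      rw [← Matrix.mulVec_mulVec, ← Matrix.mulVec_mulVec, Matrix.dotProduct_mulVec,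
        Matrix.vecMul_transpose]
    simp only [hQdef, hRdef, hSdef, Matrix.sub_mulVec, dotProduct_sub]
    rw [this]
    ring
  set ρ : ℝ := max (1 + d / c₂) 0 with hρdef
  have hρ0 : 0 ≤ ρ := le_max_right _ _
  have hρ1 : ρ < 1 := by
    apply max_lt _ one_pos
    have : d / c₂ < 0 := div_neg_of_neg_of_pos hd hc₂
    linarith
  have hdecay : ∀ v : Fin n → ℝ, Q (M *ᵥ v) ≤ ρ * Q v := by
    intro v
    have hQv0 : 0 ≤ Q v := le_trans (by positivity) (hlow v)
    have h1 : Q v / c₂ ≤ ‖v‖ ^ 2 := by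
      rw [div_le_iff₀ hc₂]
      linarith [hup v]
    have h2 : d * ‖v‖ ^ 2 ≤ d * (Q v / c₂) := mul_le_mul_of_nonpos_left h1 hd.le
    have h3 : d * (Q v / c₂) = d / c₂ * Q v := by ring
    have h4 : Q (M *ᵥ v) ≤ (1 + d / c₂) * Q v := by
      rw [hQM v]
      have := hRup v
      linarith [h2, h3.symm ▸ h2]
    calc Q (M *ᵥ v) ≤ (1 + d / c₂) * Q v := h4
      _ ≤ ρ * Q v := mul_le_mul_of_nonneg_right (le_max_left _ _) hQv0
  have hiter : ∀ k, Q ((M ^ k) *ᵥ x₀) ≤ ρ ^ k * Q x₀ := by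
    intro k
    induction k with
    | zero => simp [Matrix.one_mulVec]
    | succ k ih =>
      have hstep : (M ^ (k + 1)) *ᵥ x₀ = M *ᵥ ((M ^ k) *ᵥ x₀) := by
        rw [pow_succ' M k, ← Matrix.mulVec_mulVec]
      rw [hstep, pow_succ' ρ k]
      calc Q (M *ᵥ ((M ^ k) *ᵥ x₀)) ≤ ρ * Q ((M ^ k) *ᵥ x₀) := hdecay _
        _ ≤ ρ * (ρ ^ k * Q x₀) := mul_le_mul_of_nonneg_left ih hρ0
        _ = ρ * ρ ^ k * Q x₀ := by ring
  have hsq : Tendsto (fun k => ‖(M ^ k) *ᵥ x₀‖ ^ 2) atTop (nhds 0) := by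
    apply squeeze_zero (fun k => sq_nonneg _) (g := fun k => ρ ^ k * (Q x₀ / c₁))
    · intro k
      have h1 := hlow ((M ^ k) *ᵥ x₀)
      have h2 := hiter k
      have h3 : c₁ * ‖(M ^ k) *ᵥ x₀‖ ^ 2 ≤ ρ ^ k * Q x₀ := le_trans h1 h2
      calc ‖(M ^ k) *ᵥ x₀‖ ^ 2 = (c₁ * ‖(M ^ k) *ᵥ x₀‖ ^ 2) / c₁ := by field_simp
        _ ≤ (ρ ^ k * Q x₀) / c₁ := by gcongr
        _ = ρ ^ k * (Q x₀ / c₁) := by ring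
    · have := (tendsto_pow_atTop_nhds_zero_of_lt_one hρ0 hρ1).mul_const (Q x₀ / c₁)
      simpa using this
  have hnormt : Tendsto (fun k => ‖(M ^ k) *ᵥ x₀‖) atTop (nhds 0) := by
    have hsqrt := (Real.continuous_sqrt.tendsto 0).comp hsq
    simp only [Function.comp_def, Real.sqrt_zero] at hsqrt
    convert hsqrt using 2 with k
    rw [Real.sqrt_sq (norm_nonneg _)]
  exact tendsto_zero_iff_norm_tendsto_zero.mpr hnormt

end AuxLyap

/-- equivalence of (a) asymptotic stability of the `T`-periodic impulsive
system in the lifted sense, (b) asymptotic stability of the discrete-time system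
`x_{k+1} = exp(T·A)·J·x_k`, and (c) existence of a symmetric positive definite `P` with
`ℐ(P,A,J,T) ≺ 0`. -/
theorem stmt0 {n : ℕ} (T : ℝ) (hT : 0 < T) (A J : Matrix (Fin n) (Fin n) ℝ) :
    ((∀ x : ℕ → Fin n → ℝ,
        (∀ k, x (k + 1) = (mexp (T • A) * J).mulVec (x k)) →
        Tendsto (fun k => ⨆ τ : Set.Icc (0 : ℝ) T,
          ‖(mexp ((τ : ℝ) • A)).mulVec (J.mulVec (x k))‖) atTop (nhds 0)) ↔
      (∀ x : ℕ → Fin n → ℝ,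
        (∀ k, x (k + 1) = (mexp (T • A) * J).mulVec (x k)) →
        Tendsto x atTop (nhds 0))) ∧
    ((∀ x : ℕ → Fin n → ℝ,
        (∀ k, x (k + 1) = (mexp (T • A) * J).mulVec (x k)) →
        Tendsto x atTop (nhds 0)) ↔
      (∃ P : Matrix (Fin n) (Fin n) ℝ, P.IsSymm ∧ posDef P ∧ negDef (scrI P A J T))) := by
  letI : SeminormedRing (Matrix (Fin n) (Fin n) ℝ) := Matrix.linftyOpSemiNormedRing
  letI : NormedRing (Matrix (Fin n) (Fin n) ℝ) := Matrix.linftyOpNormedRing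
  letI : NormedAlgebra ℝ (Matrix (Fin n) (Fin n) ℝ) := Matrix.linftyOpNormedAlgebra
  letI : NormedAlgebra ℚ (Matrix (Fin n) (Fin n) ℝ) := .restrictScalars ℚ ℝ _
  have hrec_pow : ∀ (x : ℕ → Fin n → ℝ),
      (∀ k, x (k + 1) = (mexp (T • A) * J).mulVec (x k)) →
      ∀ k, x k = ((mexp (T • A) * J) ^ k) *ᵥ x 0 := by
    intro x hx k
    induction k with
    | zero => simp [Matrix.one_mulVec]
    | succ k ih =>
      rw [hx k, ih, Matrix.mulVec_mulVec, ← pow_succ']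
  constructor
  · -- (a) ↔ (b)
    have hcont : Continuous fun τ : ℝ => mexp (τ • A) := by
      simp only [mexp]
      exact NormedSpace.exp_continuous.comp (continuous_id.smul continuous_const)
    obtain ⟨τ₀, hτ₀, hmax'⟩ := (isCompact_Icc (a := (0:ℝ)) (b := T)).exists_isMaxOn
      ⟨0, Set.left_mem_Icc.mpr hT.le⟩ (hcont.norm.continuousOn)
    set C := ‖mexp (τ₀ • A)‖ with hCdef
    have hC0 : (0:ℝ) ≤ C := norm_nonneg _
    have hbound : ∀ (v : Fin n → ℝ) (τ : ℝ), τ ∈ Set.Icc (0:ℝ) T →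
        ‖mexp (τ • A) *ᵥ (J *ᵥ v)‖ ≤ C * (‖J‖ * ‖v‖) := by
      intro v τ hτ
      calc ‖mexp (τ • A) *ᵥ (J *ᵥ v)‖ ≤ ‖mexp (τ • A)‖ * ‖J *ᵥ v‖ :=
            Matrix.linfty_opNorm_mulVec _ _
        _ ≤ C * ‖J *ᵥ v‖ := mul_le_mul_of_nonneg_right (hmax' hτ) (norm_nonneg _)
        _ ≤ C * (‖J‖ * ‖v‖) :=
            mul_le_mul_of_nonneg_left (Matrix.linfty_opNorm_mulVec _ _) hC0
    haveI : Nonempty (Set.Icc (0:ℝ) T) := ⟨⟨0, Set.left_mem_Icc.mpr hT.le⟩⟩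
    constructor
    · intro h x hx
      have h1 := h x hx
      have h2 : ∀ k, ‖x (k + 1)‖ ≤
          ⨆ τ : Set.Icc (0:ℝ) T, ‖(mexp ((τ : ℝ) • A)) *ᵥ (J *ᵥ x k)‖ := by
        intro k
        have hb : BddAbove (Set.range fun τ : Set.Icc (0:ℝ) T =>
            ‖(mexp ((τ : ℝ) • A)) *ᵥ (J *ᵥ x k)‖) := by
          refine ⟨C * (‖J‖ * ‖x k‖), ?_⟩
          rintro y ⟨τ, rfl⟩
          exact hbound (x k) τ τ.2
        have hle := le_ciSup hb (⟨T, Set.right_mem_Icc.mpr hT.le⟩ : Set.Icc (0:ℝ) T)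
        have hxk : x (k + 1) = mexp (T • A) *ᵥ (J *ᵥ x k) := by
          rw [hx k, ← Matrix.mulVec_mulVec]
        rw [hxk]
        exact hle
      have h3 : Tendsto (fun k => ‖x (k + 1)‖) atTop (nhds 0) :=
        squeeze_zero (fun k => norm_nonneg _) h2 h1
      have h4 : Tendsto (fun k => x (k + 1)) atTop (nhds 0) :=
        tendsto_zero_iff_norm_tendsto_zero.mpr h3
      exact (tendsto_add_atTop_iff_nat 1).mp h4
    · intro h x hx
      have h1 := h x hx
      apply squeeze_zero (g := fun k => C * (‖J‖ * ‖x k‖))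
        (fun k => Real.iSup_nonneg fun τ => norm_nonneg _)
      · intro k
        exact ciSup_le fun τ => hbound (x k) τ τ.2
      · have := ((h1.norm).const_mul ‖J‖).const_mul C
        simpa using this
  · -- (b) ↔ (c)
    have hscr : ∀ P : Matrix (Fin n) (Fin n) ℝ,
        scrI P A J T = (mexp (T • A) * J)ᵀ * P * (mexp (T • A) * J) - P := by
      intro P
      have h1 : mexp (T • Aᵀ) = (mexp (T • A))ᵀ := by
        rw [mexp, mexp, ← Matrix.transpose_smul, Matrix.exp_transpose]
      rw [scrI, h1, Matrix.transpose_mul]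
      simp only [Matrix.mul_assoc]
    constructor
    · intro h
      have hM : ∀ x₀ : Fin n → ℝ,
          Tendsto (fun k => ((mexp (T • A) * J) ^ k) *ᵥ x₀) atTop (nhds 0) := by
        intro x₀
        refine h (fun k => ((mexp (T • A) * J) ^ k) *ᵥ x₀) (fun k => ?_)
        rw [Matrix.mulVec_mulVec, ← pow_succ']
      obtain ⟨P, h1, h2, h3⟩ := lyapunov_exists (mexp (T • A) * J) hM
      exact ⟨P, h1, h2, by rw [hscr P]; exact h3⟩
    · rintro ⟨P, hsym, hPpos, hPneg⟩ x hx
      rw [hscr P] at hPneg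
      have ht := lyapunov_tendsto (mexp (T • A) * J) P hPpos hPneg (x 0)
      have heq := hrec_pow x hx
      exact ht.congr fun k => (heq k).symm
end

section
/- Let P be a real symmetric n×n matrix and A a real n×n matrix such that AᵀP + PA is negative definite. Then for all real numbers 0 ≤ t < s, the matrix exp(s·Aᵀ)·P·exp(s·A) − exp(t·Aᵀ)·P·exp(t·A) is negative definite; in particular, the map s ↦ exp(s·Aᵀ)·P·exp(s·A) is strictly decreasing in the Loewner order on [0,∞). -/
open Matrix Filter

/-- if `AᵀP + PA ≺ 0` with `P` symmetric, then
`s ↦ exp(s·Aᵀ)·P·exp(s·A)` is strictly decreasing in the Loewner order on `[0,∞)`. -/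
theorem stmt1 {n : ℕ} (P A : Matrix (Fin n) (Fin n) ℝ) (hPsym : P.IsSymm)
    (hC : negDef (Aᵀ * P + P * A)) :
    ∀ t s : ℝ, 0 ≤ t → t < s →
      negDef (mexp (s • Aᵀ) * P * mexp (s • A) - mexp (t • Aᵀ) * P * mexp (t • A)) := by
  intro t s _ hts x hx
  letI : NormedRing (Matrix (Fin n) (Fin n) ℝ) := Matrix.linftyOpNormedRing
  letI : NormedAlgebra ℝ (Matrix (Fin n) (Fin n) ℝ) := Matrix.linftyOpNormedAlgebra
  -- the quadratic form as a continuous linear functional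
  let ℓ : Matrix (Fin n) (Fin n) ℝ →ₗ[ℝ] ℝ :=
    { toFun := fun M => x ⬝ᵥ M.mulVec x
      map_add' := fun M N => by simp [Matrix.add_mulVec, dotProduct_add]
      map_smul' := fun c M => by simp [Matrix.smul_mulVec, dotProduct_smul] }
  let L := ℓ.toContinuousLinearMap
  let F : ℝ → Matrix (Fin n) (Fin n) ℝ := fun u => mexp (u • Aᵀ) * (P * mexp (u • A))
  let F' : ℝ → Matrix (Fin n) (Fin n) ℝ := fun u =>
    Aᵀ * mexp (u • Aᵀ) * (P * mexp (u • A)) + mexp (u • Aᵀ) * (P * (mexp (u • A) * A))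
  have hF : ∀ u, HasDerivAt F (F' u) u := by
    intro u
    have h1 : HasDerivAt (fun v : ℝ => mexp (v • Aᵀ)) (Aᵀ * mexp (u • Aᵀ)) u :=
      hasDerivAt_exp_smul_const' Aᵀ u
    have h2 : HasDerivAt (fun v : ℝ => P * mexp (v • A)) (P * (mexp (u • A) * A)) u :=
      (hasDerivAt_exp_smul_const A u).const_mul P
    exact h1.mul h2
  have hderiv : ∀ u, HasDerivAt (fun v => L (F v)) (L (F' u)) u := fun u =>
    (L.hasFDerivAt.comp_hasDerivAt u (hF u))
  have hneg : ∀ u, L (F' u) < 0 := by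
    intro u
    set M := mexp (u • A) with hMdef
    have hAM : A * M = M * A := by
      have : Commute (u • A) A := (Commute.refl A).smul_left u
      exact this.exp_left.symm.eq
    have hAMt : Aᵀ * Mᵀ = Mᵀ * Aᵀ := by
      rw [← Matrix.transpose_mul, ← Matrix.transpose_mul, hAM]
    have hMT : mexp (u • Aᵀ) = Mᵀ := by
      rw [hMdef, mexp, mexp, ← Matrix.transpose_smul, Matrix.exp_transpose]
    have hid : F' u = Mᵀ * (Aᵀ * P + P * A) * M := by
      show Aᵀ * mexp (u • Aᵀ) * (P * M) + mexp (u • Aᵀ) * (P * (M * A)) = _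
      rw [hMT]
      rw [hAMt, ← hAM]
      noncomm_ring
    have hy : M.mulVec x ≠ 0 := by
      intro h0
      apply hx
      have hMM : mexp (-(u • A)) * M = 1 := by
        rw [hMdef, mexp, mexp]
        have h := Matrix.exp_add_of_commute _ _ (Commute.neg_left (Commute.refl (u • A)))
        rw [neg_add_cancel, NormedSpace.exp_zero] at h
        exact h.symm
      have := congrArg (fun v => (mexp (-(u • A))).mulVec v) h0
      simpa [Matrix.mulVec_mulVec, hMM] using this
    have hq : L (F' u) = (M.mulVec x) ⬝ᵥ (Aᵀ * P + P * A).mulVec (M.mulVec x) := by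
      show x ⬝ᵥ (F' u).mulVec x = _
      rw [hid, ← Matrix.mulVec_mulVec, ← Matrix.mulVec_mulVec,
        Matrix.dotProduct_mulVec x Mᵀ, Matrix.vecMul_transpose]
    rw [hq]
    exact hC _ hy
  have hanti : StrictAnti (fun v => L (F v)) :=
    strictAnti_of_hasDerivAt_neg hderiv hneg
  have := hanti hts
  have hEq : ∀ u : ℝ, L (F u) = x ⬝ᵥ (mexp (u • Aᵀ) * P * mexp (u • A)).mulVec x := by
    intro u; show x ⬝ᵥ (F u).mulVec x = _; rw [mul_assoc]
  have hlt : x ⬝ᵥ (mexp (s • Aᵀ) * P * mexp (s • A)).mulVec x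
      < x ⬝ᵥ (mexp (t • Aᵀ) * P * mexp (t • A)).mulVec x := by
    rw [← hEq, ← hEq]; exact this
  have : x ⬝ᵥ (mexp (s • Aᵀ) * P * mexp (s • A) - mexp (t • Aᵀ) * P * mexp (t • A)).mulVec x
      = x ⬝ᵥ (mexp (s • Aᵀ) * P * mexp (s • A)).mulVec x
        - x ⬝ᵥ (mexp (t • Aᵀ) * P * mexp (t • A)).mulVec x := by
    rw [Matrix.sub_mulVec, dotProduct_sub]
  rw [this]
  linarith
end

section
/- (Minimal dwell-time.) Let T > 0 and let A, J be real n×n matrices. Suppose there exists a real symmetric positive definite n×n matrix P such that AᵀP + PA is negative definite and ℐ(P,A,J,T) is negative definite. Then ℐ(P,A,J,s) is negative definite for every s ≥ T, and consequently for every sequence (T_k)_{k∈ℕ} of reals with T_k ≥ T for all k and every x₀ ∈ ℝⁿ, the sequence defined by x_{k+1} = exp(T_k·A)·J·x_k, x_0 = x₀, tends to 0 as k → ∞. -/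
open Matrix Filter

lemma hasDerivAt_mexp_entry {n : ℕ} (A : Matrix (Fin n) (Fin n) ℝ) (t : ℝ) (i j : Fin n) :
    HasDerivAt (fun s => mexp (s • A) i j) ((A * mexp (t • A)) i j) t := by
  letI : SeminormedRing (Matrix (Fin n) (Fin n) ℝ) := Matrix.linftyOpSemiNormedRing
  letI : NormedRing (Matrix (Fin n) (Fin n) ℝ) := Matrix.linftyOpNormedRing
  letI : NormedAlgebra ℝ (Matrix (Fin n) (Fin n) ℝ) := Matrix.linftyOpNormedAlgebra
  have h := hasDerivAt_exp_smul_const' (𝕂 := ℝ) A t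
  let e : (Matrix (Fin n) (Fin n) ℝ) →ₗ[ℝ] ℝ :=
    { toFun := fun M => M i j, map_add' := fun _ _ => rfl, map_smul' := fun _ _ => rfl }
  exact e.toContinuousLinearMap.hasFDerivAt.comp_hasDerivAt t h

lemma hasDerivAt_mexp_mulVec {n : ℕ} (A : Matrix (Fin n) (Fin n) ℝ) (y : Fin n → ℝ) (t : ℝ)
    (i : Fin n) :
    HasDerivAt (fun s => (mexp (s • A)).mulVec y i) ((A * mexp (t • A)).mulVec y i) t := by
  simp only [Matrix.mulVec, dotProduct]
  exact HasDerivAt.fun_sum fun j _ => (hasDerivAt_mexp_entry A t i j).mul_const (y j)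

lemma mexp_mulVec_ne_zero {n : ℕ} (A : Matrix (Fin n) (Fin n) ℝ) {y : Fin n → ℝ} (hy : y ≠ 0)
    (t : ℝ) : (mexp (t • A)).mulVec y ≠ 0 := by
  intro h
  apply hy
  have h1 : mexp (-(t • A)) * mexp (t • A) = 1 := by
    rw [mexp, mexp,
      ← Matrix.exp_add_of_commute (-(t • A)) (t • A) ((Commute.refl (t • A)).neg_left),
      neg_add_cancel]
    exact NormedSpace.exp_zero
  have := congrArg (fun v => (mexp (-(t • A))).mulVec v) h
  simpa [Matrix.mulVec_mulVec, h1] using this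

lemma quad_transpose_mul {n : ℕ} (P M : Matrix (Fin n) (Fin n) ℝ) (x : Fin n → ℝ) :
    x ⬝ᵥ (Mᵀ * P * M).mulVec x = (M.mulVec x) ⬝ᵥ P.mulVec (M.mulVec x) := by
  rw [Matrix.mul_assoc, ← Matrix.mulVec_mulVec, Matrix.dotProduct_mulVec,
    Matrix.vecMul_transpose, ← Matrix.mulVec_mulVec]

lemma quad_scrI {n : ℕ} (P A J : Matrix (Fin n) (Fin n) ℝ) (s : ℝ) (x : Fin n → ℝ) :
    x ⬝ᵥ (scrI P A J s).mulVec x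
      = (mexp (s • A)).mulVec (J.mulVec x) ⬝ᵥ P.mulVec ((mexp (s • A)).mulVec (J.mulVec x))
        - x ⬝ᵥ P.mulVec x := by
  have hE : mexp (s • Aᵀ) = (mexp (s • A))ᵀ := by
    rw [mexp, mexp, ← Matrix.transpose_smul s A, Matrix.exp_transpose]
  have hprod : Jᵀ * (mexp (s • A))ᵀ * P * mexp (s • A) * J
      = (mexp (s • A) * J)ᵀ * P * (mexp (s • A) * J) := by
    simp only [Matrix.transpose_mul, Matrix.mul_assoc]
  rw [scrI, hE, Matrix.sub_mulVec, dotProduct_sub, hprod, quad_transpose_mul,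
    ← Matrix.mulVec_mulVec]

lemma hasDerivAt_quad {n : ℕ} (P A : Matrix (Fin n) (Fin n) ℝ) (y : Fin n → ℝ) (t : ℝ) :
    HasDerivAt (fun s => (mexp (s • A)).mulVec y ⬝ᵥ P.mulVec ((mexp (s • A)).mulVec y))
      ((mexp (t • A)).mulVec y ⬝ᵥ (Aᵀ * P + P * A).mulVec ((mexp (t • A)).mulVec y)) t := by
  set v := (mexp (t • A)).mulVec y with hv
  set w := (A * mexp (t • A)).mulVec y with hw
  have hu : ∀ i, HasDerivAt (fun s => (mexp (s • A)).mulVec y i) (w i) t :=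
    fun i => hasDerivAt_mexp_mulVec A y t i
  have hmain : HasDerivAt
      (fun s => ∑ i, (mexp (s • A)).mulVec y i * ∑ j, P i j * (mexp (s • A)).mulVec y j)
      (∑ i, (w i * ∑ j, P i j * v j + v i * ∑ j, P i j * w j)) t :=
    HasDerivAt.fun_sum fun i _ =>
      (hu i).mul (HasDerivAt.fun_sum fun j _ => (hu j).const_mul (P i j))
  have heq : (fun s : ℝ => (mexp (s • A)).mulVec y ⬝ᵥ P.mulVec ((mexp (s • A)).mulVec y))
      = fun s : ℝ => ∑ i, (mexp (s • A)).mulVec y i * ∑ j, P i j * (mexp (s • A)).mulVec y j := by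
    rfl
  rw [heq]
  convert hmain using 1
  have hwv : w = A.mulVec v := by rw [hv, hw, Matrix.mulVec_mulVec]
  have h1 : ∑ i, (w i * ∑ j, P i j * v j + v i * ∑ j, P i j * w j)
      = w ⬝ᵥ P.mulVec v + v ⬝ᵥ P.mulVec w := by
    rw [Finset.sum_add_distrib]; rfl
  have h2 : w ⬝ᵥ P.mulVec v = v ⬝ᵥ (Aᵀ * P).mulVec v := by
    rw [hwv, ← Matrix.vecMul_transpose, ← Matrix.dotProduct_mulVec, Matrix.mulVec_mulVec]
  have h3 : v ⬝ᵥ P.mulVec w = v ⬝ᵥ (P * A).mulVec v := by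
    rw [hwv, Matrix.mulVec_mulVec]
  rw [h1, h2, h3, Matrix.add_mulVec, dotProduct_add]

lemma quad_antitone {n : ℕ} {P A : Matrix (Fin n) (Fin n) ℝ}
    (hC : negDef (Aᵀ * P + P * A)) (y : Fin n → ℝ) :
    Antitone (fun t : ℝ => (mexp (t • A)).mulVec y ⬝ᵥ P.mulVec ((mexp (t • A)).mulVec y)) := by
  by_cases hy : y = 0
  · subst hy
    simp only [Matrix.mulVec_zero, zero_dotProduct]
    exact antitone_const
  · apply antitone_of_deriv_nonpos
    · exact fun t => (hasDerivAt_quad P A y t).differentiableAt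
    · intro t
      rw [(hasDerivAt_quad P A y t).deriv]
      exact le_of_lt (hC _ (mexp_mulVec_ne_zero A hy t))

lemma cont_quad {n : ℕ} (M : Matrix (Fin n) (Fin n) ℝ) :
    Continuous fun z : Fin n → ℝ => z ⬝ᵥ M.mulVec z := by
  show Continuous fun z : Fin n → ℝ => ∑ i, z i * ∑ j, M i j * z j
  exact continuous_finset_sum _ fun i _ =>
    (continuous_apply i).mul
      (continuous_finset_sum _ fun j _ => continuous_const.mul (continuous_apply j))

lemma quad_smul {n : ℕ} (M : Matrix (Fin n) (Fin n) ℝ) (c : ℝ) (z : Fin n → ℝ) :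
    (c • z) ⬝ᵥ M.mulVec (c • z) = c ^ 2 * (z ⬝ᵥ M.mulVec z) := by
  rw [Matrix.mulVec_smul, smul_dotProduct, dotProduct_smul, smul_eq_mul,
    smul_eq_mul]
  ring

/-- Minimal dwell-time: if `P ≻ 0` is symmetric with `AᵀP + PA ≺ 0` and
`ℐ(P,A,J,T) ≺ 0`, then `ℐ(P,A,J,s) ≺ 0` for all `s ≥ T`, and every impulsive trajectory with
dwell-times `T_k ≥ T` tends to `0`. -/
theorem stmt2 {n : ℕ} (T : ℝ) (hT : 0 < T) (A J : Matrix (Fin n) (Fin n) ℝ)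
    (P : Matrix (Fin n) (Fin n) ℝ) (hPsym : P.IsSymm) (hP : posDef P)
    (hC : negDef (Aᵀ * P + P * A)) (hI : negDef (scrI P A J T)) :
    (∀ s : ℝ, T ≤ s → negDef (scrI P A J s)) ∧
    (∀ Tk : ℕ → ℝ, (∀ k, T ≤ Tk k) →
      ∀ x₀ : Fin n → ℝ, ∀ x : ℕ → Fin n → ℝ, x 0 = x₀ →
        (∀ k, x (k + 1) = (mexp (Tk k • A) * J).mulVec (x k)) →
        Tendsto x atTop (nhds 0)) := by
  have key : ∀ (y : Fin n → ℝ) {a b : ℝ}, a ≤ b →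
      (mexp (b • A)).mulVec y ⬝ᵥ P.mulVec ((mexp (b • A)).mulVec y)
        ≤ (mexp (a • A)).mulVec y ⬝ᵥ P.mulVec ((mexp (a • A)).mulVec y) :=
    fun y _ _ hab => quad_antitone hC y hab
  constructor
  · intro s hs z hz
    have h1 := key (J.mulVec z) hs
    have h2 := hI z hz
    rw [quad_scrI] at h2 ⊢
    linarith
  · intro Tk hTk x₀ x hx0 hrec
    rcases Nat.eq_zero_or_pos n with hn | hn
    · subst hn
      have hx : x = fun _ => 0 := funext fun k => funext fun i => i.elim0
      rw [hx]
      exact tendsto_const_nhds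
    · haveI : Nonempty (Fin n) := ⟨⟨0, hn⟩⟩
      obtain ⟨E, hE⟩ : ∃ E, E = mexp (T • A) := ⟨_, rfl⟩
      obtain ⟨K, hK⟩ : ∃ K, K = (E * J)ᵀ * P * (E * J) := ⟨_, rfl⟩
      have hQT : ∀ z : Fin n → ℝ, z ⬝ᵥ K.mulVec z
          = (mexp (T • A)).mulVec (J.mulVec z) ⬝ᵥ P.mulVec ((mexp (T • A)).mulVec (J.mulVec z)) := by
        intro z
        rw [hK, quad_transpose_mul, ← Matrix.mulVec_mulVec, hE]
      have hsplit : ∀ z : Fin n → ℝ,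
          z ⬝ᵥ K.mulVec z = z ⬝ᵥ (scrI P A J T).mulVec z + z ⬝ᵥ P.mulVec z := by
        intro z
        rw [hQT z, quad_scrI]
        ring
      -- compactness on the unit sphere
      have hcomp : IsCompact (Metric.sphere (0 : Fin n → ℝ) 1) := isCompact_sphere 0 1
      have hne : (Metric.sphere (0 : Fin n → ℝ) 1).Nonempty :=
        NormedSpace.sphere_nonempty.mpr zero_le_one
      obtain ⟨x₁, hx₁m, hx₁⟩ := hcomp.exists_isMaxOn hne (cont_quad (scrI P A J T)).continuousOn
      obtain ⟨x₂, hx₂m, hx₂⟩ := hcomp.exists_isMaxOn hne (cont_quad P).continuousOn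
      obtain ⟨x₃, hx₃m, hx₃⟩ := hcomp.exists_isMinOn hne (cont_quad P).continuousOn
      have sphere_ne_zero : ∀ z ∈ Metric.sphere (0 : Fin n → ℝ) 1, z ≠ 0 := by
        intro z hz h0
        rw [mem_sphere_zero_iff_norm, h0, norm_zero] at hz
        exact one_ne_zero hz.symm
      obtain ⟨δ, hδdef⟩ : ∃ d : ℝ, d = -(x₁ ⬝ᵥ (scrI P A J T).mulVec x₁) := ⟨_, rfl⟩
      have hδ : 0 < δ := hδdef ▸ neg_pos.mpr (hI x₁ (sphere_ne_zero x₁ hx₁m))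
      obtain ⟨Wmax, hWmaxdef⟩ : ∃ w : ℝ, w = x₂ ⬝ᵥ P.mulVec x₂ := ⟨_, rfl⟩
      have hWmax : 0 < Wmax := hWmaxdef ▸ hP x₂ (sphere_ne_zero x₂ hx₂m)
      obtain ⟨c, hcdef⟩ : ∃ c : ℝ, c = x₃ ⬝ᵥ P.mulVec x₃ := ⟨_, rfl⟩
      have hc : 0 < c := hcdef ▸ hP x₃ (sphere_ne_zero x₃ hx₃m)
      obtain ⟨ρ, hρdef⟩ : ∃ r : ℝ, r = max 0 (1 - δ / Wmax) := ⟨_, rfl⟩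
      have hρ0 : 0 ≤ ρ := hρdef ▸ le_max_left _ _
      have hρ1 : ρ < 1 := by
        rw [hρdef]
        apply max_lt one_pos
        have : 0 < δ / Wmax := div_pos hδ hWmax
        linarith
      -- contraction on the sphere, then by homogeneity everywhere
      have contraction : ∀ z : Fin n → ℝ, z ⬝ᵥ K.mulVec z ≤ ρ * (z ⬝ᵥ P.mulVec z) := by
        intro z
        by_cases hz : z = 0
        · subst hz
          simp [Matrix.mulVec_zero, dotProduct_zero]
        · have hr : (0:ℝ) < ‖z‖ := norm_pos_iff.mpr hz
          obtain ⟨u, hu⟩ : ∃ u : Fin n → ℝ, u = ‖z‖⁻¹ • z := ⟨_, rfl⟩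
          have hum : u ∈ Metric.sphere (0 : Fin n → ℝ) 1 := by
            rw [mem_sphere_zero_iff_norm, hu, norm_smul, norm_inv, norm_norm]
            exact inv_mul_cancel₀ (ne_of_gt hr)
          have hune : u ≠ 0 := sphere_ne_zero u hum
          have hzu : z = ‖z‖ • u := by
            rw [hu, smul_smul, mul_inv_cancel₀ (ne_of_gt hr), one_smul]
          have hIu : u ⬝ᵥ (scrI P A J T).mulVec u ≤ -δ := by
            rw [hδdef, neg_neg]
            exact hx₁ hum
          have hWu1 : u ⬝ᵥ P.mulVec u ≤ Wmax := hWmaxdef ▸ hx₂ hum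
          have hWu0 : 0 < u ⬝ᵥ P.mulVec u := hP u hune
          have hKu : u ⬝ᵥ K.mulVec u ≤ ρ * (u ⬝ᵥ P.mulVec u) := by
            rw [hsplit]
            have h5 : δ / Wmax * (u ⬝ᵥ P.mulVec u) ≤ δ := by
              calc δ / Wmax * (u ⬝ᵥ P.mulVec u) ≤ δ / Wmax * Wmax :=
                    mul_le_mul_of_nonneg_left hWu1 (le_of_lt (div_pos hδ hWmax))
                _ = δ := div_mul_cancel₀ δ (ne_of_gt hWmax)
            have h6 : 1 - δ / Wmax ≤ ρ := hρdef ▸ le_max_right _ _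
            nlinarith [mul_le_mul_of_nonneg_right h6 (le_of_lt hWu0)]
          calc z ⬝ᵥ K.mulVec z = (‖z‖ • u) ⬝ᵥ K.mulVec (‖z‖ • u) := by rw [← hzu]
            _ = ‖z‖ ^ 2 * (u ⬝ᵥ K.mulVec u) := quad_smul K _ u
            _ ≤ ‖z‖ ^ 2 * (ρ * (u ⬝ᵥ P.mulVec u)) :=
                mul_le_mul_of_nonneg_left hKu (sq_nonneg _)
            _ = ρ * ((‖z‖ • u) ⬝ᵥ P.mulVec (‖z‖ • u)) := by rw [quad_smul]; ring
            _ = ρ * (z ⬝ᵥ P.mulVec z) := by rw [← hzu]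
      -- Lyapunov decay along the trajectory
      have step : ∀ k, x (k+1) ⬝ᵥ P.mulVec (x (k+1)) ≤ ρ * (x k ⬝ᵥ P.mulVec (x k)) := by
        intro k
        have h7 : x (k+1) = (mexp (Tk k • A)).mulVec (J.mulVec (x k)) := by
          rw [hrec k, ← Matrix.mulVec_mulVec]
        rw [h7]
        calc (mexp (Tk k • A)).mulVec (J.mulVec (x k)) ⬝ᵥ
              P.mulVec ((mexp (Tk k • A)).mulVec (J.mulVec (x k)))
            ≤ (mexp (T • A)).mulVec (J.mulVec (x k)) ⬝ᵥ
              P.mulVec ((mexp (T • A)).mulVec (J.mulVec (x k))) := key (J.mulVec (x k)) (hTk k)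
          _ = x k ⬝ᵥ K.mulVec (x k) := (hQT (x k)).symm
          _ ≤ ρ * (x k ⬝ᵥ P.mulVec (x k)) := contraction (x k)
      have decay : ∀ k, x k ⬝ᵥ P.mulVec (x k) ≤ ρ ^ k * (x 0 ⬝ᵥ P.mulVec (x 0)) := by
        intro k
        induction k with
        | zero => simp
        | succ k ih =>
          calc x (k+1) ⬝ᵥ P.mulVec (x (k+1)) ≤ ρ * (x k ⬝ᵥ P.mulVec (x k)) := step k
            _ ≤ ρ * (ρ ^ k * (x 0 ⬝ᵥ P.mulVec (x 0))) := mul_le_mul_of_nonneg_left ih hρ0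
            _ = ρ ^ (k+1) * (x 0 ⬝ᵥ P.mulVec (x 0)) := by ring
      have lower : ∀ z : Fin n → ℝ, c * ‖z‖ ^ 2 ≤ z ⬝ᵥ P.mulVec z := by
        intro z
        by_cases hz : z = 0
        · subst hz
          simp [Matrix.mulVec_zero]
        · have hr : (0:ℝ) < ‖z‖ := norm_pos_iff.mpr hz
          obtain ⟨u, hu⟩ : ∃ u : Fin n → ℝ, u = ‖z‖⁻¹ • z := ⟨_, rfl⟩
          have hum : u ∈ Metric.sphere (0 : Fin n → ℝ) 1 := by
            rw [mem_sphere_zero_iff_norm, hu, norm_smul, norm_inv, norm_norm]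
            exact inv_mul_cancel₀ (ne_of_gt hr)
          have hzu : z = ‖z‖ • u := by
            rw [hu, smul_smul, mul_inv_cancel₀ (ne_of_gt hr), one_smul]
          have hcu : c ≤ u ⬝ᵥ P.mulVec u := hcdef ▸ hx₃ hum
          calc c * ‖z‖ ^ 2 ≤ (u ⬝ᵥ P.mulVec u) * ‖z‖ ^ 2 :=
                mul_le_mul_of_nonneg_right hcu (sq_nonneg _)
            _ = (‖z‖ • u) ⬝ᵥ P.mulVec (‖z‖ • u) := by rw [quad_smul]; ring
            _ = z ⬝ᵥ P.mulVec z := by rw [← hzu]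
      -- squeeze to the limit
      have hbound : ∀ k, ‖x k‖ ^ 2 ≤ ρ ^ k * ((x 0 ⬝ᵥ P.mulVec (x 0)) / c) := by
        intro k
        have h8 := le_trans (lower (x k)) (decay k)
        rw [← mul_div_assoc, le_div_iff₀ hc]
        nlinarith [h8]
      have hlim0 : Tendsto (fun k => ρ ^ k * ((x 0 ⬝ᵥ P.mulVec (x 0)) / c)) atTop (nhds 0) := by
        have h9 := (tendsto_pow_atTop_nhds_zero_of_lt_one hρ0 hρ1).mul_const
          ((x 0 ⬝ᵥ P.mulVec (x 0)) / c)
        simpa using h9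
      have hsq : Tendsto (fun k => ‖x k‖ ^ 2) atTop (nhds 0) :=
        squeeze_zero (fun k => sq_nonneg _) hbound hlim0
      have hnorm : Tendsto (fun k => ‖x k‖) atTop (nhds 0) := by
        have h9 := (Real.continuous_sqrt.tendsto 0).comp hsq
        simp only [Function.comp_def, Real.sqrt_zero] at h9
        have h10 : (fun k => Real.sqrt (‖x k‖ ^ 2)) = fun k => ‖x k‖ :=
          funext fun k => Real.sqrt_sq (norm_nonneg _)
        rwa [h10] at h9
      exact tendsto_zero_iff_norm_tendsto_zero.mpr hnorm
end

section
/- (Ranged dwell-time, affine conditions.) Let 0 < T_min ≤ T_max < ∞ and let A, J be real n×n matrices. Suppose there exist real symmetric positive definite n×n matrices P and Z, real symmetric n×n matrices Q and U, a real n×n matrix R, and a real n×2n matrix N such that Ψ(T) and Φ(T) are negative definite for both T = T_min and T = T_max. Then ℐ(P,A,J,θ) is negative definite for every θ ∈ [T_min, T_max]. -/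
open Matrix Filter

/-- The n×2n block matrix `[I 0]`. -/
def Mxb (n : ℕ) : Matrix (Fin n) (Fin n ⊕ Fin n) ℝ := Matrix.fromCols 1 0

/-- The n×2n block matrix `[0 I]`. -/
def Mmb (n : ℕ) : Matrix (Fin n) (Fin n ⊕ Fin n) ℝ := Matrix.fromCols 0 1

/-- The n×2n block matrix `[I −J]`. -/
def Mzb {n : ℕ} (J : Matrix (Fin n) (Fin n) ℝ) : Matrix (Fin n) (Fin n ⊕ Fin n) ℝ :=
  Matrix.fromCols 1 (-J)

/-- He[X] := X + Xᵀ. -/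
def He {m : Type*} (X : Matrix m m ℝ) : Matrix m m ℝ := X + Xᵀ

/-- The 2n×2n matrix `F₀`. -/
def F0 {n : ℕ} (T : ℝ) (A J P Q R : Matrix (Fin n) (Fin n) ℝ)
    (N : Matrix (Fin n) (Fin n ⊕ Fin n) ℝ) :
    Matrix (Fin n ⊕ Fin n) (Fin n ⊕ Fin n) ℝ :=
  T • ((Mxb n)ᵀ * (Aᵀ * P + P * A) * Mxb n) - (Mzb J)ᵀ * Q * Mzb J
    + (Mmb n)ᵀ * (Jᵀ * P * J - P) * Mmb n
    + He (Nᵀ * Mzb J - (Mzb J)ᵀ * R * Mxb n)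

/-- The 2n×2n matrix `F₂`. -/
def F2 {n : ℕ} (A J Q R Z : Matrix (Fin n) (Fin n) ℝ) :
    Matrix (Fin n ⊕ Fin n) (Fin n ⊕ Fin n) ℝ :=
  He ((Mxb n)ᵀ * Aᵀ * Q * Mzb J + (Mxb n)ᵀ * Aᵀ * R * Mxb n + (Mzb J)ᵀ * R * A * Mxb n)
    + (Mxb n)ᵀ * Aᵀ * Z * A * Mxb n

/-- The 2n×2n matrix `F₃`. -/
def F3 {n : ℕ} (J U : Matrix (Fin n) (Fin n) ℝ) :
    Matrix (Fin n ⊕ Fin n) (Fin n ⊕ Fin n) ℝ :=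
  (Mmb n)ᵀ * Jᵀ * U * J * Mmb n

/-- The 2n×2n matrix `Ψ(T) = F₀ + T·(F₂ + F₃)`. -/
def Psi {n : ℕ} (T : ℝ) (A J P Z Q U R : Matrix (Fin n) (Fin n) ℝ)
    (N : Matrix (Fin n) (Fin n ⊕ Fin n) ℝ) :
    Matrix (Fin n ⊕ Fin n) (Fin n ⊕ Fin n) ℝ :=
  F0 T A J P Q R N + T • (F2 A J Q R Z + F3 J U)

/-- The 3n×3n block matrix `Φ(T) = [[F₀ − T·F₃, Nᵀ],[N, −Z/T]]`. -/
noncomputable def Phi {n : ℕ} (T : ℝ) (A J P Z Q U R : Matrix (Fin n) (Fin n) ℝ)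
    (N : Matrix (Fin n) (Fin n ⊕ Fin n) ℝ) :
    Matrix ((Fin n ⊕ Fin n) ⊕ Fin n) ((Fin n ⊕ Fin n) ⊕ Fin n) ℝ :=
  Matrix.fromBlocks (F0 T A J P Q R N - T • F3 J U) Nᵀ N (-(T⁻¹ • Z))

section Aux
variable {n : ℕ} {m : Type*} [Fintype m]

lemma dot_transpose_mulVec (L : Matrix (Fin n) m ℝ) (v : m → ℝ) (z : Fin n → ℝ) :
    v ⬝ᵥ (Lᵀ *ᵥ z) = (L *ᵥ v) ⬝ᵥ z := by
  rw [dotProduct_mulVec, vecMul_transpose]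

lemma quad_sandwich (L : Matrix (Fin n) m ℝ) (M : Matrix (Fin n) (Fin n) ℝ)
    (L' : Matrix (Fin n) m ℝ) (v w : m → ℝ) :
    v ⬝ᵥ (Lᵀ * M * L') *ᵥ w = (L *ᵥ v) ⬝ᵥ M *ᵥ (L' *ᵥ w) := by
  rw [← mulVec_mulVec, ← mulVec_mulVec, dot_transpose_mulVec, mulVec_mulVec]

lemma quad_rect (Nm : Matrix (Fin n) m ℝ) (L' : Matrix (Fin n) m ℝ) (v w : m → ℝ) :
    v ⬝ᵥ (Nmᵀ * L') *ᵥ w = (Nm *ᵥ v) ⬝ᵥ (L' *ᵥ w) := by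
  rw [← mulVec_mulVec, dot_transpose_mulVec]

lemma quad_transpose (X : Matrix m m ℝ) (v : m → ℝ) :
    v ⬝ᵥ Xᵀ *ᵥ v = v ⬝ᵥ X *ᵥ v := by
  rw [dotProduct_mulVec, vecMul_transpose, dotProduct_comm]

lemma dot_symm {Q : Matrix (Fin n) (Fin n) ℝ} (hQ : Q.IsSymm) (a b : Fin n → ℝ) :
    a ⬝ᵥ Q *ᵥ b = b ⬝ᵥ Q *ᵥ a := by
  rw [dotProduct_mulVec, ← mulVec_transpose, hQ.eq, dotProduct_comm]

lemma negDef_comb {M₁ M₂ : Matrix m m ℝ} (h1 : negDef M₁) (h2 : negDef M₂)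
    {a b : ℝ} (ha : 0 ≤ a) (hb : 0 ≤ b) (hab : a + b = 1) :
    negDef (a • M₁ + b • M₂) := by
  intro x hx
  have e : x ⬝ᵥ (a • M₁ + b • M₂) *ᵥ x
      = a * (x ⬝ᵥ M₁ *ᵥ x) + b * (x ⬝ᵥ M₂ *ᵥ x) := by
    rw [add_mulVec, dotProduct_add, smul_mulVec, smul_mulVec,
      dotProduct_smul, dotProduct_smul]
    simp [smul_eq_mul]
  rw [e]
  rcases eq_or_lt_of_le ha with ha' | ha'
  · have : b = 1 := by linarith
    simp [← ha', this]; exact h2 x hx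
  · nlinarith [h1 x hx, h2 x hx]

end Aux

section Quad
variable {n : ℕ}

lemma Mxb_mulVec (u v : Fin n → ℝ) : Mxb n *ᵥ Sum.elim u v = u := by
  simp [Mxb]

lemma Mmb_mulVec (u v : Fin n → ℝ) : Mmb n *ᵥ Sum.elim u v = v := by
  simp [Mmb]

lemma Mzb_mulVec (J : Matrix (Fin n) (Fin n) ℝ) (u v : Fin n → ℝ) :
    Mzb J *ᵥ Sum.elim u v = u - J *ᵥ v := by
  simp [Mzb, neg_mulVec, sub_eq_add_neg]

variable (A J P Z Q U R : Matrix (Fin n) (Fin n) ℝ) (N : Matrix (Fin n) (Fin n ⊕ Fin n) ℝ)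
  (T : ℝ) (u v : Fin n → ℝ)

lemma quad_He (X : Matrix (Fin n ⊕ Fin n) (Fin n ⊕ Fin n) ℝ) (w : Fin n ⊕ Fin n → ℝ) :
    w ⬝ᵥ He X *ᵥ w = 2 * (w ⬝ᵥ X *ᵥ w) := by
  rw [He, add_mulVec, dotProduct_add, quad_transpose, two_mul]

lemma quad_F0 :
    Sum.elim u v ⬝ᵥ F0 T A J P Q R N *ᵥ Sum.elim u v =
      T * (u ⬝ᵥ (Aᵀ * P + P * A) *ᵥ u) - (u - J *ᵥ v) ⬝ᵥ Q *ᵥ (u - J *ᵥ v)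
      + v ⬝ᵥ (Jᵀ * P * J - P) *ᵥ v
      + 2 * ((N *ᵥ Sum.elim u v) ⬝ᵥ (u - J *ᵥ v) - (u - J *ᵥ v) ⬝ᵥ R *ᵥ u) := by
  rw [F0, add_mulVec, add_mulVec, dotProduct_add, dotProduct_add, quad_He]
  simp only [sub_mulVec, smul_mulVec, dotProduct_sub, dotProduct_smul, smul_eq_mul,
    quad_transpose, ← mulVec_mulVec, dot_transpose_mulVec, Mxb_mulVec, Mmb_mulVec, Mzb_mulVec,
    mulVec_sub, mulVec_add, sub_dotProduct, add_dotProduct]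

lemma quad_F2 :
    Sum.elim u v ⬝ᵥ F2 A J Q R Z *ᵥ Sum.elim u v =
      2 * ((A *ᵥ u) ⬝ᵥ Q *ᵥ (u - J *ᵥ v) + (A *ᵥ u) ⬝ᵥ R *ᵥ u + (u - J *ᵥ v) ⬝ᵥ R *ᵥ (A *ᵥ u))
      + (A *ᵥ u) ⬝ᵥ Z *ᵥ (A *ᵥ u) := by
  rw [F2, add_mulVec, dotProduct_add, quad_He]
  simp only [add_mulVec, sub_mulVec, dotProduct_sub, quad_transpose, ← mulVec_mulVec, dot_transpose_mulVec,
    Mxb_mulVec, Mmb_mulVec, Mzb_mulVec, mulVec_sub, mulVec_add, sub_dotProduct, add_dotProduct,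
    dotProduct_add]

lemma quad_F3 :
    Sum.elim u v ⬝ᵥ F3 J U *ᵥ Sum.elim u v = (J *ᵥ v) ⬝ᵥ U *ᵥ (J *ᵥ v) := by
  rw [F3]
  simp only [← mulVec_mulVec, dot_transpose_mulVec, Mmb_mulVec, mulVec_sub, sub_dotProduct,
    dotProduct_sub]

lemma quad_N :
    Sum.elim u v ⬝ᵥ (Nᵀ * Z⁻¹ * N) *ᵥ Sum.elim u v
      = (N *ᵥ Sum.elim u v) ⬝ᵥ Z⁻¹ *ᵥ (N *ᵥ Sum.elim u v) := by
  simp only [← mulVec_mulVec, dot_transpose_mulVec]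

lemma quad_add {m : Type*} [Fintype m] (M M' : Matrix m m ℝ) (w : m → ℝ) :
    w ⬝ᵥ (M + M') *ᵥ w = w ⬝ᵥ M *ᵥ w + w ⬝ᵥ M' *ᵥ w := by
  rw [add_mulVec, dotProduct_add]

lemma quad_sub {m : Type*} [Fintype m] (M M' : Matrix m m ℝ) (w : m → ℝ) :
    w ⬝ᵥ (M - M') *ᵥ w = w ⬝ᵥ M *ᵥ w - w ⬝ᵥ M' *ᵥ w := by
  rw [sub_mulVec, dotProduct_sub]

lemma quad_smul_s7 {m : Type*} [Fintype m] (c : ℝ) (M : Matrix m m ℝ) (w : m → ℝ) :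
    w ⬝ᵥ (c • M) *ᵥ w = c * (w ⬝ᵥ M *ᵥ w) := by
  rw [smul_mulVec, dotProduct_smul, smul_eq_mul]

end Quad

section Affine
variable {n : ℕ} (A J P Z Q U R : Matrix (Fin n) (Fin n) ℝ)
  (N : Matrix (Fin n) (Fin n ⊕ Fin n) ℝ)

/-- The Schur complement matrix of `Φ(T)`. -/
noncomputable def Sm (T : ℝ) : Matrix (Fin n ⊕ Fin n) (Fin n ⊕ Fin n) ℝ :=
  F0 T A J P Q R N - T • F3 J U + T • (Nᵀ * Z⁻¹ * N)

lemma Psi_comb (a T1 T2 : ℝ) :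
    Psi (a*T1+(1-a)*T2) A J P Z Q U R N
      = a • Psi T1 A J P Z Q U R N + (1-a) • Psi T2 A J P Z Q U R N := by
  unfold Psi F0; module

lemma Sm_comb (a T1 T2 : ℝ) :
    Sm A J P Z Q U R N (a*T1+(1-a)*T2)
      = a • Sm A J P Z Q U R N T1 + (1-a) • Sm A J P Z Q U R N T2 := by
  unfold Sm F0; module

lemma quad_N' (w : Fin n ⊕ Fin n → ℝ) (M : Matrix (Fin n) (Fin n) ℝ) :
    w ⬝ᵥ (Nᵀ * M * N) *ᵥ w = (N *ᵥ w) ⬝ᵥ M *ᵥ (N *ᵥ w) := by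
  simp only [← mulVec_mulVec, dot_transpose_mulVec]

lemma Z_mul_inv (hZsym : Z.IsSymm) (hZ : posDef Z) : Z * Z⁻¹ = 1 := by
  have hpd : Matrix.PosDef Z := by
    refine Matrix.PosDef.of_dotProduct_mulVec_pos ?_ fun x hx => by simpa using hZ x hx
    rw [Matrix.IsHermitian, conjTranspose_eq_transpose_of_trivial, hZsym.eq]
  exact Z.mul_nonsing_inv (isUnit_iff_isUnit_det _ |>.1 hpd.isUnit)

lemma Zinv_symm (hZsym : Z.IsSymm) : (Z⁻¹).IsSymm := by
  rw [Matrix.IsSymm, Matrix.transpose_nonsing_inv, hZsym.eq]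

lemma Sm_negDef (T : ℝ) (hT : 0 < T) (hZsym : Z.IsSymm) (hZ : posDef Z)
    (h : negDef (Phi T A J P Z Q U R N)) : negDef (Sm A J P Z Q U R N T) := by
  have hZZ := Z_mul_inv Z hZsym hZ
  intro y hy
  set a : Fin n → ℝ := N *ᵥ y with ha
  set z : Fin n → ℝ := T • (Z⁻¹ *ᵥ a) with hz
  have hw : Sum.elim y z ≠ 0 := by
    intro hcon
    apply hy
    ext i
    exact congrFun hcon (Sum.inl i)
  have key := h (Sum.elim y z) hw
  have e1 : Z *ᵥ (Z⁻¹ *ᵥ a) = a := by rw [mulVec_mulVec, hZZ, one_mulVec]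
  have hq : (Z⁻¹ *ᵥ a) ⬝ᵥ a = a ⬝ᵥ Z⁻¹ *ᵥ a := dotProduct_comm _ _
  have c1 : a ⬝ᵥ z = T * (a ⬝ᵥ Z⁻¹ *ᵥ a) := by rw [hz, dotProduct_smul, smul_eq_mul]
  have c2 : z ⬝ᵥ a = T * (a ⬝ᵥ Z⁻¹ *ᵥ a) := by rw [dotProduct_comm, c1]
  have c3 : z ⬝ᵥ (-(T⁻¹ • Z)) *ᵥ z = -(T * (a ⬝ᵥ Z⁻¹ *ᵥ a)) := by
    have hZz : Z *ᵥ z = T • a := by rw [hz, mulVec_smul, e1]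
    rw [neg_mulVec, dotProduct_neg, smul_mulVec, dotProduct_smul, hZz, dotProduct_smul,
      c2, smul_eq_mul, smul_eq_mul]
    field_simp
  have e2 : Sum.elim y z ⬝ᵥ Phi T A J P Z Q U R N *ᵥ Sum.elim y z
      = y ⬝ᵥ (F0 T A J P Q R N - T • F3 J U) *ᵥ y + T * (a ⬝ᵥ Z⁻¹ *ᵥ a) := by
    rw [Phi, fromBlocks_mulVec, sumElim_dotProduct_sumElim]
    simp only [Sum.elim_comp_inl, Sum.elim_comp_inr]
    rw [dotProduct_add, dotProduct_add, dot_transpose_mulVec, ← ha, c1, c2, c3]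
    ring
  have e3 : y ⬝ᵥ Sm A J P Z Q U R N T *ᵥ y
      = y ⬝ᵥ (F0 T A J P Q R N - T • F3 J U) *ᵥ y + T * (a ⬝ᵥ Z⁻¹ *ᵥ a) := by
    rw [Sm, quad_add, quad_smul_s7, quad_N']
  rw [e3, ← e2]; exact key
end Affine

section Deriv
attribute [local instance] Matrix.linftyOpNormedRing Matrix.linftyOpNormedAlgebra

variable {n : ℕ}

/-- `M ↦ M *ᵥ v` as a continuous linear map. -/
noncomputable def mulVecCLM (v : Fin n → ℝ) :
    Matrix (Fin n) (Fin n) ℝ →L[ℝ] (Fin n → ℝ) :=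
  LinearMap.toContinuousLinearMap
    { toFun := fun M => M *ᵥ v
      map_add' := fun M M' => Matrix.add_mulVec M M' v
      map_smul' := fun c M => Matrix.smul_mulVec c M v }

lemma hasDerivAt_xfun (A : Matrix (Fin n) (Fin n) ℝ) (v : Fin n → ℝ) (t : ℝ) :
    HasDerivAt (fun s : ℝ => mexp (s • A) *ᵥ v) (A *ᵥ (mexp (t • A) *ᵥ v)) t := by
  have h := hasDerivAt_exp_smul_const' (𝕂 := ℝ) A t
  have h2 := ((mulVecCLM v).hasFDerivAt.comp_hasDerivAt t h)
  simpa [← mulVec_mulVec] using (show HasDerivAt (fun s : ℝ => mexp (s • A) *ᵥ v) ((A * mexp (t • A)) *ᵥ v) t from h2)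

lemma hasDerivAt_dot {t : ℝ} {u w : ℝ → Fin n → ℝ} {u' w' : Fin n → ℝ}
    (hu : HasDerivAt u u' t) (hw : HasDerivAt w w' t) :
    HasDerivAt (fun s => u s ⬝ᵥ w s) (u' ⬝ᵥ w t + u t ⬝ᵥ w') t := by
  have h : HasDerivAt (fun s => ∑ i, u s i * w s i)
      (∑ i, (u' i * w t i + u t i * w' i)) t :=
    HasDerivAt.fun_sum fun i _ => ((hasDerivAt_pi.1 hu i).mul (hasDerivAt_pi.1 hw i))
  simpa [dotProduct, Finset.sum_add_distrib] using h

lemma hasDerivAt_mulVec {t : ℝ} (M : Matrix (Fin n) (Fin n) ℝ) {w : ℝ → Fin n → ℝ}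
    {w' : Fin n → ℝ} (hw : HasDerivAt w w' t) :
    HasDerivAt (fun s => M *ᵥ w s) (M *ᵥ w') t := by
  refine hasDerivAt_pi.2 fun i => ?_
  have h : HasDerivAt (fun s => ∑ j, M i j * w s j) (∑ j, M i j * w' j) t :=
    HasDerivAt.fun_sum fun j _ => ((hasDerivAt_pi.1 hw j).const_mul (M i j))
  simpa [mulVec, dotProduct] using h

lemma hasDerivAt_quadform {t : ℝ} (M : Matrix (Fin n) (Fin n) ℝ) {u w : ℝ → Fin n → ℝ}
    {u' w' : Fin n → ℝ} (hu : HasDerivAt u u' t) (hw : HasDerivAt w w' t) :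
    HasDerivAt (fun s => u s ⬝ᵥ M *ᵥ w s) (u' ⬝ᵥ M *ᵥ w t + u t ⬝ᵥ M *ᵥ w') t :=
  hasDerivAt_dot hu (hasDerivAt_mulVec M hw)

lemma jensen (Zs : Matrix (Fin n) (Fin n) ℝ) (hpsd : ∀ w : Fin n → ℝ, 0 ≤ w ⬝ᵥ Zs *ᵥ w)
    (f : ℝ → Fin n → ℝ) (hf : Continuous f) (s : ℝ) (hs : 0 < s)
    (ζ : Fin n → ℝ) (hζ : ∀ i, ζ i = ∫ u in (0:ℝ)..s, f u i) :
    s⁻¹ * (ζ ⬝ᵥ Zs *ᵥ ζ) ≤ ∫ u in (0:ℝ)..s, f u ⬝ᵥ Zs *ᵥ f u := by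
  have hfi : ∀ i, Continuous fun u => f u i := fun i => (continuous_apply i).comp hf
  set c : Fin n → ℝ := s⁻¹ • ζ with hc
  have hint1 : ∀ (v : Fin n → ℝ), (∫ u in (0:ℝ)..s, f u ⬝ᵥ v) = ζ ⬝ᵥ v := by
    intro v
    have : ∀ u, f u ⬝ᵥ v = ∑ i, f u i * v i := fun u => rfl
    simp only [this]
    rw [intervalIntegral.integral_finset_sum]
    · simp only [intervalIntegral.integral_mul_const]
      simp only [dotProduct, ← hζ]
    · exact fun i _ => (((hfi i).mul continuous_const)).intervalIntegrable _ _
  have hZf : ∀ i, Continuous fun u => (Zs *ᵥ f u) i := fun i => by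
    simp only [mulVec, dotProduct]
    exact continuous_finset_sum _ fun j _ => continuous_const.mul (hfi j)
  have hgcont : Continuous fun u => f u ⬝ᵥ Zs *ᵥ f u := by
    simp only [dotProduct]
    exact continuous_finset_sum _ fun i _ => (hfi i).mul (hZf i)
  set w : Fin n → ℝ := Zs *ᵥ c + c ᵥ* Zs with hw
  have hfw : Continuous fun u => f u ⬝ᵥ w := by
    simp only [dotProduct]
    exact continuous_finset_sum _ fun i _ => (hfi i).mul continuous_const
  have expand : ∀ u, (f u - c) ⬝ᵥ Zs *ᵥ (f u - c)
      = (f u ⬝ᵥ Zs *ᵥ f u - f u ⬝ᵥ w) + c ⬝ᵥ Zs *ᵥ c := by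
    intro u
    rw [hw, dotProduct_add, mulVec_sub, dotProduct_sub, sub_dotProduct, sub_dotProduct,
      dotProduct_mulVec c Zs, dotProduct_comm (c ᵥ* Zs) (f u)]
    ring
  have key : (0:ℝ) ≤ ∫ u in (0:ℝ)..s, (f u - c) ⬝ᵥ Zs *ᵥ (f u - c) :=
    intervalIntegral.integral_nonneg hs.le fun u _ => hpsd _
  have split : (∫ u in (0:ℝ)..s, (f u - c) ⬝ᵥ Zs *ᵥ (f u - c))
      = (∫ u in (0:ℝ)..s, f u ⬝ᵥ Zs *ᵥ f u) - ζ ⬝ᵥ w + s * (c ⬝ᵥ Zs *ᵥ c) := by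
    simp only [expand]
    rw [intervalIntegral.integral_add (f := fun u => f u ⬝ᵥ Zs *ᵥ f u - f u ⬝ᵥ w) ((hgcont.sub hfw).intervalIntegrable _ _)
      (intervalIntegrable_const), intervalIntegral.integral_sub
      (hgcont.intervalIntegrable _ _) (hfw.intervalIntegrable _ _),
      hint1 w, intervalIntegral.integral_const, smul_eq_mul]
    ring
  rw [split] at key
  have hvm : ζ ⬝ᵥ (ζ ᵥ* Zs) = ζ ⬝ᵥ Zs *ᵥ ζ := by
    rw [dotProduct_comm]
    exact (dotProduct_mulVec ζ Zs ζ).symm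
  have hzw : ζ ⬝ᵥ w = s⁻¹ * (ζ ⬝ᵥ Zs *ᵥ ζ) + s⁻¹ * (ζ ⬝ᵥ Zs *ᵥ ζ) := by
    rw [hw, dotProduct_add, hc, mulVec_smul, dotProduct_smul, smul_vecMul, dotProduct_smul,
      hvm]
    simp only [smul_eq_mul]
  have hcc : c ⬝ᵥ Zs *ᵥ c = s⁻¹ * (s⁻¹ * (ζ ⬝ᵥ Zs *ᵥ ζ)) := by
    rw [hc, smul_dotProduct, mulVec_smul, dotProduct_smul]
    simp only [smul_eq_mul]
  rw [hzw, hcc] at key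
  have hss : s * (s⁻¹ * (s⁻¹ * (ζ ⬝ᵥ Zs *ᵥ ζ))) = s⁻¹ * (ζ ⬝ᵥ Zs *ᵥ ζ) := by
    field_simp
  linarith

end Deriv

section Main
variable {n : ℕ}

lemma cont_dot_mulVec {f h : ℝ → Fin n → ℝ} (hf : Continuous f) (hh : Continuous h)
    (M : Matrix (Fin n) (Fin n) ℝ) : Continuous fun s => f s ⬝ᵥ M *ᵥ h s := by
  have hhi : ∀ i, Continuous fun u => (M *ᵥ h u) i := fun i => by
    simp only [mulVec, dotProduct]
    exact continuous_finset_sum _ fun j _ => continuous_const.mul ((continuous_apply j).comp hh)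
  simp only [dotProduct]
  exact continuous_finset_sum _ fun i _ => ((continuous_apply i).comp hf).mul (hhi i)

lemma csq (Z : Matrix (Fin n) (Fin n) ℝ) (hZsym : Z.IsSymm) (hZZ : Z * Z⁻¹ = 1)
    (hpsd : ∀ w : Fin n → ℝ, 0 ≤ w ⬝ᵥ Z *ᵥ w) (a ζ : Fin n → ℝ) {s : ℝ} (hs : 0 < s) :
    0 ≤ s⁻¹ * (ζ ⬝ᵥ Z *ᵥ ζ) + 2 * (a ⬝ᵥ ζ) + s * (a ⬝ᵥ Z⁻¹ *ᵥ a) := by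
  have e1 : Z *ᵥ (Z⁻¹ *ᵥ a) = a := by rw [mulVec_mulVec, hZZ, one_mulVec]
  have h := hpsd (ζ + s • (Z⁻¹ *ᵥ a))
  have hswap : (Z⁻¹ *ᵥ a) ⬝ᵥ Z *ᵥ ζ = ζ ⬝ᵥ a := by
    rw [dot_symm hZsym, e1]
  have h2 : 0 ≤ ζ ⬝ᵥ Z *ᵥ ζ + 2 * s * (a ⬝ᵥ ζ) + s * s * (a ⬝ᵥ Z⁻¹ *ᵥ a) := by
    have expand : (ζ + s • (Z⁻¹ *ᵥ a)) ⬝ᵥ Z *ᵥ (ζ + s • (Z⁻¹ *ᵥ a))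
        = ζ ⬝ᵥ Z *ᵥ ζ + 2 * s * (a ⬝ᵥ ζ) + s * s * (a ⬝ᵥ Z⁻¹ *ᵥ a) := by
      rw [mulVec_add, dotProduct_add, add_dotProduct, add_dotProduct, mulVec_smul]
      simp only [dotProduct_smul, smul_dotProduct, smul_eq_mul]
      rw [e1, hswap, dotProduct_comm ζ a, dotProduct_comm (Z⁻¹ *ᵥ a) a]
      ring
    rw [expand] at h
    exact h
  have key := mul_nonneg (inv_nonneg.2 hs.le) h2
  have e2 : s⁻¹ * (ζ ⬝ᵥ Z *ᵥ ζ + 2 * s * (a ⬝ᵥ ζ) + s * s * (a ⬝ᵥ Z⁻¹ *ᵥ a))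
      = s⁻¹ * (ζ ⬝ᵥ Z *ᵥ ζ) + 2 * (a ⬝ᵥ ζ) + s * (a ⬝ᵥ Z⁻¹ *ᵥ a) := by
    field_simp
  rw [e2] at key
  exact key

lemma negDef_affine {m : Type*} [Fintype m] (f : ℝ → Matrix m m ℝ)
    (haff : ∀ a T1 T2 : ℝ, f (a * T1 + (1 - a) * T2) = a • f T1 + (1 - a) • f T2)
    {T1 T2 θ : ℝ} (h1 : negDef (f T1)) (h2 : negDef (f T2)) (hθ : θ ∈ Set.Icc T1 T2) :
    negDef (f θ) := by
  rcases eq_or_lt_of_le (hθ.1.trans hθ.2) with hT | hT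
  · have : θ = T1 := le_antisymm (hT ▸ hθ.2) hθ.1
    rw [this]; exact h1
  · set a := (T2 - θ) / (T2 - T1) with ha
    have hd : (0:ℝ) < T2 - T1 := by linarith
    have ha0 : 0 ≤ a := div_nonneg (by linarith [hθ.2]) hd.le
    have ha1 : a ≤ 1 := by
      rw [ha, div_le_one hd]; linarith [hθ.1]
    have hrep : θ = a * T1 + (1 - a) * T2 := by
      rw [ha]; field_simp; ring
    rw [hrep, haff]
    exact negDef_comb h1 h2 ha0 (by linarith) (by ring)

end Main


/-- Ranged dwell-time, affine conditions: if `Ψ(T) ≺ 0` and `Φ(T) ≺ 0` for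
both `T = T_min` and `T = T_max`, then `ℐ(P,A,J,θ) ≺ 0` for every `θ ∈ [T_min, T_max]`. -/
theorem stmt7 {n : ℕ} (Tmin Tmax : ℝ) (h1 : 0 < Tmin) (h2 : Tmin ≤ Tmax)
    (A J : Matrix (Fin n) (Fin n) ℝ)
    (P Z Q U R : Matrix (Fin n) (Fin n) ℝ) (N : Matrix (Fin n) (Fin n ⊕ Fin n) ℝ)
    (hPsym : P.IsSymm) (hP : posDef P) (hZsym : Z.IsSymm) (hZ : posDef Z)
    (hQsym : Q.IsSymm) (hUsym : U.IsSymm)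
    (hPsi : ∀ T ∈ ({Tmin, Tmax} : Set ℝ), negDef (Psi T A J P Z Q U R N))
    (hPhi : ∀ T ∈ ({Tmin, Tmax} : Set ℝ), negDef (Phi T A J P Z Q U R N)) :
    ∀ θ ∈ Set.Icc Tmin Tmax, negDef (scrI P A J θ) := by
  have hZZ : Z * Z⁻¹ = 1 := Z_mul_inv Z hZsym hZ
  have hZpsd : ∀ w : Fin n → ℝ, 0 ≤ w ⬝ᵥ Z *ᵥ w := by
    intro w
    rcases eq_or_ne w 0 with h | h
    · simp [h]
    · exact (hZ w h).le
  have hTmm : Tmin ∈ ({Tmin, Tmax} : Set ℝ) := Set.mem_insert _ _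
  have hTmM : Tmax ∈ ({Tmin, Tmax} : Set ℝ) := Set.mem_insert_of_mem _ rfl
  intro θ hθ
  have hθpos : 0 < θ := lt_of_lt_of_le h1 hθ.1
  have hPsiθ : negDef (Psi θ A J P Z Q U R N) :=
    negDef_affine (fun T => Psi T A J P Z Q U R N)
      (fun a T1 T2 => Psi_comb A J P Z Q U R N a T1 T2)
      (hPsi Tmin hTmm) (hPsi Tmax hTmM) hθ
  have hSmθ : negDef (Sm A J P Z Q U R N θ) :=
    negDef_affine (fun T => Sm A J P Z Q U R N T)
      (fun a T1 T2 => Sm_comb A J P Z Q U R N a T1 T2)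
      (Sm_negDef A J P Z Q U R N Tmin h1 hZsym hZ (hPhi Tmin hTmm))
      (Sm_negDef A J P Z Q U R N Tmax (h1.trans_le h2) hZsym hZ (hPhi Tmax hTmM)) hθ
  intro x₀ hx₀
  set x : ℝ → Fin n → ℝ := fun s => mexp (s • A) *ᵥ (J *ᵥ x₀) with hxdef
  have hx : ∀ t, HasDerivAt x (A *ᵥ x t) t := fun t => hasDerivAt_xfun A (J *ᵥ x₀) t
  have hx0eq : x 0 = J *ᵥ x₀ := by
    rw [hxdef]
    show mexp ((0:ℝ) • A) *ᵥ (J *ᵥ x₀) = J *ᵥ x₀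
    rw [zero_smul, mexp, NormedSpace.exp_zero, one_mulVec]
  have hxc : Continuous x := continuous_iff_continuousAt.2 fun t => (hx t).continuousAt
  have hAx : Continuous fun u => A *ᵥ x u := by
    refine continuous_pi fun i => ?_
    simp only [mulVec, dotProduct]
    exact continuous_finset_sum _ fun j _ => continuous_const.mul ((continuous_apply j).comp hxc)
  have hζd : ∀ t, HasDerivAt (fun s => x s - J *ᵥ x₀) (A *ᵥ x t) t :=
    fun t => (hx t).sub_const _
  have hgc : Continuous fun u => (A *ᵥ x u) ⬝ᵥ Z *ᵥ (A *ᵥ x u) := cont_dot_mulVec hAx hAx Z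
  set G : ℝ → ℝ := fun s => ∫ u in (0:ℝ)..s, (A *ᵥ x u) ⬝ᵥ Z *ᵥ (A *ᵥ x u) with hGdef
  have hGd : ∀ t, HasDerivAt G ((A *ᵥ x t) ⬝ᵥ Z *ᵥ (A *ᵥ x t)) t :=
    fun t => (hgc.integral_hasStrictDerivAt 0 t).hasDerivAt
  have hG0 : G 0 = 0 := by rw [hGdef]; simp
  have hζint : ∀ (s : ℝ) (i : Fin n),
      (x s - J *ᵥ x₀) i = ∫ u in (0:ℝ)..s, (A *ᵥ x u) i := by
    intro s i
    have hda : ∀ u ∈ Set.uIcc (0:ℝ) s, HasDerivAt (fun r => x r i) ((A *ᵥ x u) i) u :=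
      fun u _ => hasDerivAt_pi.1 (hx u) i
    have hint : IntervalIntegrable (fun u => (A *ᵥ x u) i) MeasureTheory.volume 0 s :=
      ((continuous_apply i).comp hAx).intervalIntegrable _ _
    rw [intervalIntegral.integral_eq_sub_of_hasDerivAt hda hint, hx0eq]
    simp [Pi.sub_apply]
  set cJ : ℝ := x₀ ⬝ᵥ (Jᵀ * P * J - P) *ᵥ x₀ with hcJ
  set cU : ℝ := (J *ᵥ x₀) ⬝ᵥ U *ᵥ (J *ᵥ x₀) with hcU
  set W : ℝ → ℝ := fun s =>
    θ * (x s ⬝ᵥ P *ᵥ x s) + s * cJ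
      + (θ - s) * ((x s - J *ᵥ x₀) ⬝ᵥ Q *ᵥ (x s - J *ᵥ x₀)
          + 2 * ((x s - J *ᵥ x₀) ⬝ᵥ R *ᵥ x s))
      + (θ - s) * G s + (s * (θ - s)) * cU with hWdef
  set D : ℝ → ℝ := fun t =>
    θ * ((A *ᵥ x t) ⬝ᵥ P *ᵥ x t + x t ⬝ᵥ P *ᵥ (A *ᵥ x t)) + cJ
      - ((x t - J *ᵥ x₀) ⬝ᵥ Q *ᵥ (x t - J *ᵥ x₀) + 2 * ((x t - J *ᵥ x₀) ⬝ᵥ R *ᵥ x t))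
      + (θ - t) * (((A *ᵥ x t) ⬝ᵥ Q *ᵥ (x t - J *ᵥ x₀)
          + (A *ᵥ x t) ⬝ᵥ Q *ᵥ (x t - J *ᵥ x₀))
          + 2 * ((A *ᵥ x t) ⬝ᵥ R *ᵥ x t + (x t - J *ᵥ x₀) ⬝ᵥ R *ᵥ (A *ᵥ x t)))
      - G t + (θ - t) * ((A *ᵥ x t) ⬝ᵥ Z *ᵥ (A *ᵥ x t)) + (θ - 2 * t) * cU with hDdef
  have hQswap : ∀ t, (x t - J *ᵥ x₀) ⬝ᵥ Q *ᵥ (A *ᵥ x t)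
      = (A *ᵥ x t) ⬝ᵥ Q *ᵥ (x t - J *ᵥ x₀) := fun t => dot_symm hQsym _ _
  have hWd : ∀ t, HasDerivAt W (D t) t := by
    intro t
    have hdθt : HasDerivAt (fun s : ℝ => θ - s) (0 - 1) t :=
      (hasDerivAt_const t θ).sub (hasDerivAt_id t)
    have hd1 := (hasDerivAt_quadform P (hx t) (hx t)).const_mul θ
    have hd2 : HasDerivAt (fun s : ℝ => s * cJ) cJ t := hasDerivAt_mul_const cJ
    have hd3 := hdθt.mul ((hasDerivAt_quadform Q (hζd t) (hζd t)).add
      ((hasDerivAt_quadform R (hζd t) (hx t)).const_mul 2))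
    have hd4 := hdθt.mul (hGd t)
    have hd5 := ((hasDerivAt_id t).mul hdθt).mul_const cU
    have base := (((hd1.add hd2).add hd3).add hd4).add hd5
    rw [hWdef, hDdef]
    refine base.congr_deriv ?_
    rw [hQswap t]
    simp only [id_eq, Pi.add_apply]
    ring
  have hDneg : ∀ t ∈ Set.Ioo (0:ℝ) θ, D t < 0 := by
    intro t ht
    have hχ : Sum.elim (x t) x₀ ≠ 0 := by
      intro hcon
      exact hx₀ (funext fun i => congrFun hcon (Sum.inr i))
    have hq1 := hPsiθ (Sum.elim (x t) x₀) hχ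
    have hq2 := hSmθ (Sum.elim (x t) x₀) hχ
    have eψ : Sum.elim (x t) x₀ ⬝ᵥ Psi θ A J P Z Q U R N *ᵥ Sum.elim (x t) x₀
        = (θ * (x t ⬝ᵥ (Aᵀ * P + P * A) *ᵥ x t)
            - (x t - J *ᵥ x₀) ⬝ᵥ Q *ᵥ (x t - J *ᵥ x₀)
            + x₀ ⬝ᵥ (Jᵀ * P * J - P) *ᵥ x₀
            + 2 * ((N *ᵥ Sum.elim (x t) x₀) ⬝ᵥ (x t - J *ᵥ x₀)
                - (x t - J *ᵥ x₀) ⬝ᵥ R *ᵥ x t))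
          + θ * ((2 * ((A *ᵥ x t) ⬝ᵥ Q *ᵥ (x t - J *ᵥ x₀) + (A *ᵥ x t) ⬝ᵥ R *ᵥ x t
                + (x t - J *ᵥ x₀) ⬝ᵥ R *ᵥ (A *ᵥ x t))
              + (A *ᵥ x t) ⬝ᵥ Z *ᵥ (A *ᵥ x t))
            + (J *ᵥ x₀) ⬝ᵥ U *ᵥ (J *ᵥ x₀)) := by
      rw [Psi, quad_add, quad_smul_s7, quad_add, quad_F0, quad_F2, quad_F3]
    have eS : Sum.elim (x t) x₀ ⬝ᵥ Sm A J P Z Q U R N θ *ᵥ Sum.elim (x t) x₀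
        = (θ * (x t ⬝ᵥ (Aᵀ * P + P * A) *ᵥ x t)
            - (x t - J *ᵥ x₀) ⬝ᵥ Q *ᵥ (x t - J *ᵥ x₀)
            + x₀ ⬝ᵥ (Jᵀ * P * J - P) *ᵥ x₀
            + 2 * ((N *ᵥ Sum.elim (x t) x₀) ⬝ᵥ (x t - J *ᵥ x₀)
                - (x t - J *ᵥ x₀) ⬝ᵥ R *ᵥ x t))
          - θ * ((J *ᵥ x₀) ⬝ᵥ U *ᵥ (J *ᵥ x₀))
          + θ * ((N *ᵥ Sum.elim (x t) x₀) ⬝ᵥ Z⁻¹ *ᵥ (N *ᵥ Sum.elim (x t) x₀)) := by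
      rw [Sm, quad_add, quad_sub, quad_smul_s7, quad_smul_s7, quad_F0, quad_F3, quad_N']
    have hJen : t⁻¹ * ((x t - J *ᵥ x₀) ⬝ᵥ Z *ᵥ (x t - J *ᵥ x₀)) ≤ G t := by
      rw [hGdef]
      exact jensen Z hZpsd (fun u => A *ᵥ x u) hAx t ht.1 (x t - J *ᵥ x₀) (hζint t)
    have hcsq := csq Z hZsym hZZ hZpsd (N *ᵥ Sum.elim (x t) x₀) (x t - J *ᵥ x₀) ht.1
    have hE : 0 ≤ 2 * ((N *ᵥ Sum.elim (x t) x₀) ⬝ᵥ (x t - J *ᵥ x₀))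
        + t * ((N *ᵥ Sum.elim (x t) x₀) ⬝ᵥ Z⁻¹ *ᵥ (N *ᵥ Sum.elim (x t) x₀)) + G t := by
      have hdc : (N *ᵥ Sum.elim (x t) x₀) ⬝ᵥ (x t - J *ᵥ x₀)
          = (N *ᵥ Sum.elim (x t) x₀) ⬝ᵥ (x t - J *ᵥ x₀) := rfl
      nlinarith [hJen, hcsq]
    have ePq : x t ⬝ᵥ (Aᵀ * P + P * A) *ᵥ x t
        = (A *ᵥ x t) ⬝ᵥ P *ᵥ x t + x t ⬝ᵥ P *ᵥ (A *ᵥ x t) := by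
      rw [add_mulVec, dotProduct_add, ← mulVec_mulVec, dot_transpose_mulVec, ← mulVec_mulVec]
    have hcombo : D t + (2 * ((N *ᵥ Sum.elim (x t) x₀) ⬝ᵥ (x t - J *ᵥ x₀))
          + t * ((N *ᵥ Sum.elim (x t) x₀) ⬝ᵥ Z⁻¹ *ᵥ (N *ᵥ Sum.elim (x t) x₀)) + G t)
        = (1 - t / θ) * (Sum.elim (x t) x₀ ⬝ᵥ Psi θ A J P Z Q U R N *ᵥ Sum.elim (x t) x₀)
          + (t / θ) * (Sum.elim (x t) x₀ ⬝ᵥ Sm A J P Z Q U R N θ *ᵥ Sum.elim (x t) x₀) := by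
      rw [eψ, eS, ePq, hDdef, hcJ, hcU]
      field_simp
      ring
    have hc1 : 0 < 1 - t / θ := by
      have : t / θ < 1 := (div_lt_one hθpos).2 ht.2
      linarith
    have hc2 : 0 < t / θ := div_pos ht.1 hθpos
    have hstep : D t ≤ (1 - t / θ) * (Sum.elim (x t) x₀ ⬝ᵥ Psi θ A J P Z Q U R N *ᵥ Sum.elim (x t) x₀)
        + (t / θ) * (Sum.elim (x t) x₀ ⬝ᵥ Sm A J P Z Q U R N θ *ᵥ Sum.elim (x t) x₀) := by
      linarith [hE, hcombo]
    have h1' := mul_neg_of_pos_of_neg hc1 hq1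
    have h2' := mul_neg_of_pos_of_neg hc2 hq2
    exact lt_of_le_of_lt hstep (by linarith [h1', h2'])
  have hWcont : Continuous W := by
    have : Differentiable ℝ W := fun t => (hWd t).differentiableAt
    exact this.continuous
  have hanti : StrictAntiOn W (Set.Icc 0 θ) := by
    refine strictAntiOn_of_deriv_neg (convex_Icc 0 θ) hWcont.continuousOn ?_
    intro t ht
    rw [interior_Icc] at ht
    rw [(hWd t).deriv]
    exact hDneg t ht
  have hWlt : W θ < W 0 :=
    hanti (Set.left_mem_Icc.2 hθpos.le) (Set.right_mem_Icc.2 hθpos.le) hθpos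
  have hW0 : W 0 = θ * ((J *ᵥ x₀) ⬝ᵥ P *ᵥ (J *ᵥ x₀)) := by
    rw [hWdef]
    show θ * (x 0 ⬝ᵥ P *ᵥ x 0) + 0 * cJ
        + (θ - 0) * ((x 0 - J *ᵥ x₀) ⬝ᵥ Q *ᵥ (x 0 - J *ᵥ x₀)
            + 2 * ((x 0 - J *ᵥ x₀) ⬝ᵥ R *ᵥ x 0))
        + (θ - 0) * G 0 + (0 * (θ - 0)) * cU = θ * ((J *ᵥ x₀) ⬝ᵥ P *ᵥ (J *ᵥ x₀))
    rw [hx0eq, hG0]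
    simp
  have hWθ : W θ = θ * (x θ ⬝ᵥ P *ᵥ x θ) + θ * cJ := by
    rw [hWdef]
    show θ * (x θ ⬝ᵥ P *ᵥ x θ) + θ * cJ
        + (θ - θ) * ((x θ - J *ᵥ x₀) ⬝ᵥ Q *ᵥ (x θ - J *ᵥ x₀)
            + 2 * ((x θ - J *ᵥ x₀) ⬝ᵥ R *ᵥ x θ))
        + (θ - θ) * G θ + (θ * (θ - θ)) * cU = θ * (x θ ⬝ᵥ P *ᵥ x θ) + θ * cJ
    simp
  have hscr : x₀ ⬝ᵥ scrI P A J θ *ᵥ x₀ = x θ ⬝ᵥ P *ᵥ x θ - x₀ ⬝ᵥ P *ᵥ x₀ := by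
    rw [scrI, quad_sub]
    have hEt : Jᵀ * mexp (θ • Aᵀ) * P * mexp (θ • A) * J
        = (mexp (θ • A) * J)ᵀ * P * (mexp (θ • A) * J) := by
      have : mexp (θ • Aᵀ) = (mexp (θ • A))ᵀ := by
        rw [mexp, mexp, ← transpose_smul, Matrix.exp_transpose]
      rw [this, transpose_mul]
      simp only [Matrix.mul_assoc]
    rw [hEt, quad_sandwich, ← mulVec_mulVec]
  have hfin : θ * (x₀ ⬝ᵥ scrI P A J θ *ᵥ x₀) < 0 := by
    have hqJ : cJ = (J *ᵥ x₀) ⬝ᵥ P *ᵥ (J *ᵥ x₀) - x₀ ⬝ᵥ P *ᵥ x₀ := by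
      rw [hcJ, quad_sub]
      congr 1
      rw [← mulVec_mulVec, ← mulVec_mulVec, dot_transpose_mulVec]
    rw [hscr]
    rw [hW0, hWθ, hqJ] at hWlt
    nlinarith [hWlt]
  rcases lt_or_ge (x₀ ⬝ᵥ scrI P A J θ *ᵥ x₀) 0 with hend | hend
  · exact hend
  · exfalso
    linarith [mul_nonneg hθpos.le hend]
end
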